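/- arXiv:2604.27227 — 4 statements merged into one kernel-verified Lean document; each statement's English description precedes it below -/
import Mathlib

section
/- Let R = (V, A) be a strongly connected digraph that is walk-Helly, and let (u,v) be an authorized arc of R (u ≠ v). Then the digraph R′ = (V, A ∪ {(u,v)}) obtained by adding the arc (u,v) to R is walk-Helly. -/
/-! Common definitions: temporal (di)graphs, journeys, footprints,
closed walks, the walk-Helly property, tree representations, etc. -/

variable {V : Type*}

/-- Underlying undirected simple graph of a digraph given by its arc relation. -/
def underGraph (A : V → V → Prop) : SimpleGraph V where
  Adj u v := u ≠ v ∧ (A u v ∨ A v u)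
  symm := ⟨fun _ _ h => ⟨h.1.symm, h.2.symm⟩⟩
  loopless := ⟨fun _ h => h.1 rfl⟩

/-- Number of connected components of a digraph (components of the underlying graph). -/
noncomputable def numComponents (A : V → V → Prop) : ℕ :=
  Nat.card (underGraph A).ConnectedComponent

/-- A directed circuit: a closed directed walk whose vertices are pairwise
distinct except for the repeated endpoint. -/
def IsCircuit (A : V → V → Prop) (k : ℕ) (w : ℕ → V) : Prop :=
  1 ≤ k ∧ w k = w 0 ∧ (∀ i < k, A (w i) (w (i + 1))) ∧
    ∀ i < k, ∀ j < k, w i = w j → i = j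

/-- A directed feedback vertex set: every circuit contains a vertex of `S`. -/
def IsDFVS (A : V → V → Prop) (S : Set V) : Prop :=
  ∀ (k : ℕ) (w : ℕ → V), IsCircuit A k w → ∃ i < k, w i ∈ S

/-- A valid finite set of temporal arcs: distinct endpoints, positive times. -/
def ValidDiTemporal (E : Finset ((V × V) × ℕ)) : Prop :=
  ∀ e ∈ E, e.1.1 ≠ e.1.2 ∧ 1 ≤ e.2

/-- A (strict) journey from `u` to `v` in a temporal digraph with arc set `E`. -/
def DiJourney (E : Set ((V × V) × ℕ)) (u v : V) : Prop :=
  ∃ (k : ℕ) (w : ℕ → V) (t : ℕ → ℕ),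
    1 ≤ k ∧ w 0 = u ∧ w k = v ∧
    (∀ i < k, ((w i, w (i + 1)), t i) ∈ E) ∧
    (∀ i, i + 1 < k → t i < t (i + 1))

/-- Arcs of the reachability graph of a temporal digraph. -/
def reachArc (E : Set ((V × V) × ℕ)) (u v : V) : Prop :=
  u ≠ v ∧ DiJourney E u v

/-- Arcs of the (directed) footprint of a temporal digraph. -/
def footArc (E : Set ((V × V) × ℕ)) (u v : V) : Prop :=
  ∃ t, ((u, v), t) ∈ E

/-- A valid finite set of undirected temporal edges: non-loop edges, positive times. -/
def ValidTemporal (E : Finset (Sym2 V × ℕ)) : Prop :=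
  ∀ e ∈ E, ¬ e.1.IsDiag ∧ 1 ≤ e.2

/-- A (strict) journey from `u` to `v` in an undirected temporal graph with edge set `E`. -/
def Journey (E : Set (Sym2 V × ℕ)) (u v : V) : Prop :=
  ∃ (k : ℕ) (w : ℕ → V) (t : ℕ → ℕ),
    1 ≤ k ∧ w 0 = u ∧ w k = v ∧
    (∀ i < k, (s(w i, w (i + 1)), t i) ∈ E) ∧
    (∀ i, i + 1 < k → t i < t (i + 1))

/-- The temporal graph with edge set `E` satisfies the request graph `A`. -/
def Satisfies (E : Set (Sym2 V × ℕ)) (A : V → V → Prop) : Prop :=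
  ∀ u v : V, A u v → Journey E u v

/-- Footprint of an undirected temporal graph. -/
def footprint (E : Set (Sym2 V × ℕ)) : SimpleGraph V where
  Adj u v := u ≠ v ∧ ∃ t, (s(u, v), t) ∈ E
  symm := by
    constructor
    intro u v h
    obtain ⟨h1, t, ht⟩ := h
    exact ⟨h1.symm, t, by rwa [Sym2.eq_swap]⟩
  loopless := ⟨fun _ h => h.1 rfl⟩

/-- A tree solution for the request graph `A`: a valid temporal graph satisfying
all the requests and whose footprint is a tree on the whole vertex set. -/
def IsTreeSolution (E : Finset (Sym2 V × ℕ)) (A : V → V → Prop) : Prop :=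
  ValidTemporal E ∧ Satisfies (↑E : Set (Sym2 V × ℕ)) A ∧
    (footprint (↑E : Set (Sym2 V × ℕ))).IsTree

/-- A closed directed walk of length `k ≥ 1` in the digraph `A`. -/
def IsClosedWalk (A : V → V → Prop) (k : ℕ) (w : ℕ → V) : Prop :=
  1 ≤ k ∧ w k = w 0 ∧ ∀ i < k, A (w i) (w (i + 1))

/-- Vertex set of a walk of length `k`. -/
def walkSet (k : ℕ) (w : ℕ → V) : Set V := {x | ∃ i < k, w i = x}

/-- `S` is the vertex set of some closed walk of `A`. -/
def IsWalkSet (A : V → V → Prop) (S : Set V) : Prop :=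
  ∃ (k : ℕ) (w : ℕ → V), IsClosedWalk A k w ∧ S = walkSet k w

/-- The digraph `A` is walk-Helly: every (nonempty) family of vertex sets of
closed walks that pairwise intersect has a common vertex. -/
def WalkHelly (A : V → V → Prop) : Prop :=
  ∀ 𝒮 : Set (Set V), 𝒮.Nonempty → (∀ S ∈ 𝒮, IsWalkSet A S) →
    (∀ S ∈ 𝒮, ∀ S' ∈ 𝒮, (S ∩ S').Nonempty) → (⋂₀ 𝒮).Nonempty

/-- A tree representation of the digraph `A`: a tree on the vertex set such that the
vertex set of every closed walk of `A` induces a connected subgraph. -/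
def IsTreeRep (A : V → V → Prop) (T : SimpleGraph V) : Prop :=
  T.IsTree ∧ ∀ S : Set V, IsWalkSet A S → (T.induce S).Connected

/-- `(u, v)` is an authorized arc of `A`: there is no vertex `x` lying both on a
closed walk through `u` avoiding `v` and on a closed walk through `v` avoiding `u`. -/
def IsAuthorized (A : V → V → Prop) (u v : V) : Prop :=
  ¬ ∃ x : V, (∃ S, IsWalkSet A S ∧ u ∈ S ∧ x ∈ S ∧ v ∉ S) ∧
             (∃ S, IsWalkSet A S ∧ v ∈ S ∧ x ∈ S ∧ u ∉ S)

/-- The undirected graph of forced edges of `A` (pairs with arcs in both directions). -/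
def forcedGraph (A : V → V → Prop) : SimpleGraph V where
  Adj u v := u ≠ v ∧ A u v ∧ A v u
  symm := ⟨fun _ _ h => ⟨h.1.symm, h.2.2, h.2.1⟩⟩
  loopless := ⟨fun _ h => h.1 rfl⟩

/-! ### Auxiliary machinery for stmt9 -/

open Relation

/-- A directed walk in `A` from `a` to `b` all of whose vertices satisfy `P`. -/
def S9AWalk (A : V → V → Prop) (P : V → Prop) (a b : V) : Prop :=
  ∃ n : ℕ, ∃ w : ℕ → V, w 0 = a ∧ w n = b ∧ (∀ i < n, A (w i) (w (i + 1))) ∧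
    ∀ i ≤ n, P (w i)

namespace S9AWalk

variable {A : V → V → Prop} {P Q : V → Prop} {a b c : V}

lemma rfl' (h : P a) : S9AWalk A P a a :=
  ⟨0, fun _ => a, rfl, rfl, fun i hi => by omega, fun _ _ => h⟩

lemma startP (h : S9AWalk A P a b) : P a := by
  obtain ⟨n, w, h0, hn, _, hP⟩ := h
  exact h0 ▸ hP 0 (Nat.zero_le _)

lemma endP (h : S9AWalk A P a b) : P b := by
  obtain ⟨n, w, h0, hn, _, hP⟩ := h
  exact hn ▸ hP n le_rfl

lemma mono (hPQ : ∀ x, P x → Q x) (h : S9AWalk A P a b) : S9AWalk A Q a b := by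
  obtain ⟨n, w, h0, hn, harc, hP⟩ := h
  exact ⟨n, w, h0, hn, harc, fun i hi => hPQ _ (hP i hi)⟩

lemma comp (h₁ : S9AWalk A P a b) (h₂ : S9AWalk A P b c) : S9AWalk A P a c := by
  obtain ⟨n₁, w₁, h10, h1n, harc1, hP1⟩ := h₁
  obtain ⟨n₂, w₂, h20, h2n, harc2, hP2⟩ := h₂
  refine ⟨n₁ + n₂, fun i => if i < n₁ then w₁ i else w₂ (i - n₁), ?_, ?_, ?_, ?_⟩
  · by_cases h : 0 < n₁
    · simp only [if_pos h, h10]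
    · have hn0 : n₁ = 0 := by omega
      have hba : b = a := by rw [← h1n, hn0, h10]
      subst hn0
      simpa [h20] using hba
  · have : ¬ (n₁ + n₂ < n₁) := by omega
    simp [this, h2n]
  · intro i hi
    by_cases h : i + 1 < n₁
    · have h' : i < n₁ := by omega
      simp only [if_pos h, if_pos h']
      exact harc1 i h'
    · by_cases h' : i < n₁
      · have he : i + 1 = n₁ := by omega
        have e0 : i + 1 - n₁ = 0 := by omega
        simp only [if_pos h', if_neg h, e0, h20]
        rw [← h1n, ← he]
        exact harc1 i h'
      · have h'' : ¬ (i + 1 < n₁) := by omega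
        simp only [if_neg h', if_neg h'']
        have : i + 1 - n₁ = (i - n₁) + 1 := by omega
        rw [this]
        exact harc2 (i - n₁) (by omega)
  · intro i hi
    by_cases h : i < n₁
    · simp only [if_pos h]; exact hP1 i (by omega)
    · simp only [if_neg h]; exact hP2 (i - n₁) (by omega)

end S9AWalk

section S9RTG

variable {A : V → V → Prop} {a b : V}

/-- The last vertex of a reflexive-transitive chain is the start or a step target. -/
lemma S9rtg_last {r : V → V → Prop} (h : Relation.ReflTransGen r a b) :
    b = a ∨ ∃ p, r p b := by
  induction h with
  | refl => exact Or.inl rfl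
  | tail _ hstep _ => exact Or.inr ⟨_, hstep⟩

/-- Convert a chain whose relation constrains targets into a property-carrying walk. -/
lemma S9rtg_awalk {Q : V → Prop}
    (h : Relation.ReflTransGen (fun p q => A p q ∧ Q q) a b) :
    S9AWalk A (fun x => x = a ∨ Q x) a b := by
  induction h with
  | refl => exact S9AWalk.rfl' (Or.inl rfl)
  | @tail p q hap hstep ih =>
      refine ih.comp ⟨1, fun i => if i = 0 then p else q, by simp, by simp, ?_, ?_⟩
      · intro i hi
        have : i = 0 := by omega
        simp [this, hstep.1]
      · intro i hi
        rcases Nat.le_one_iff_eq_zero_or_eq_one.mp hi with h0 | h1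
        · subst h0
          simp only [if_pos rfl]
          rcases S9rtg_last hap with he | ⟨x, hx⟩
          · exact Or.inl he
          · exact Or.inr hx.2
        · subst h1; simp [hstep.2]

end S9RTG

/-- Close three walks `a → b`, `b → c`, `c → a` into a closed walk; its vertex set
is a walk set containing `a`, `b`, `c`, all of whose elements satisfy `P`. -/
lemma S9close3 {A : V → V → Prop} {P : V → Prop} {a b c : V} (hab : a ≠ b)
    (h₁ : S9AWalk A P a b) (h₂ : S9AWalk A P b c) (h₃ : S9AWalk A P c a) :
    ∃ S, IsWalkSet A S ∧ a ∈ S ∧ b ∈ S ∧ c ∈ S ∧ ∀ x ∈ S, P x := by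
  obtain ⟨n₁, w₁, h10, h1n, harc1, hP1⟩ := h₁
  obtain ⟨n₂, w₂, h20, h2n, harc2, hP2⟩ := h₂
  obtain ⟨n₃, w₃, h30, h3n, harc3, hP3⟩ := h₃
  have hn₁ : 1 ≤ n₁ := by
    rcases Nat.eq_zero_or_pos n₁ with h | h
    · exact absurd (by rw [← h10, ← h1n, h]) hab
    · exact h
  set n := n₁ + n₂ + n₃ with hn
  set W : ℕ → V := fun i =>
    if i < n₁ then w₁ i else if i < n₁ + n₂ then w₂ (i - n₁) else w₃ (i - n₁ - n₂)
    with hW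
  have hWa : ∀ i ≤ n₁, W i = w₁ i := by
    intro i hi
    by_cases h : i < n₁
    · simp only [hW]; rw [if_pos h]
    · have he : i = n₁ := by omega
      simp only [hW]
      rw [if_neg h]
      by_cases h2 : i < n₁ + n₂
      · rw [if_pos h2, he, Nat.sub_self, h20, ← h1n]
      · have h2' : n₂ = 0 := by omega
        have hbc : b = c := by rw [← h2n, h2', h20]
        have e0 : i - n₁ - n₂ = 0 := by omega
        rw [if_neg h2, e0, h30, ← hbc, he, h1n]
  have hWb : ∀ i, n₁ ≤ i → i ≤ n₁ + n₂ → W i = w₂ (i - n₁) := by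
    intro i hi1 hi2
    have h1 : ¬ i < n₁ := by omega
    simp only [hW]
    rw [if_neg h1]
    by_cases h2 : i < n₁ + n₂
    · rw [if_pos h2]
    · have he : i = n₁ + n₂ := by omega
      have e0 : i - n₁ - n₂ = 0 := by omega
      have e1 : i - n₁ = n₂ := by omega
      rw [if_neg h2, e0, h30, e1, h2n]
  have hWc : ∀ i, n₁ + n₂ ≤ i → W i = w₃ (i - n₁ - n₂) := by
    intro i hi
    have h1 : ¬ i < n₁ := by omega
    have h2 : ¬ i < n₁ + n₂ := by omega
    simp only [hW]
    rw [if_neg h1, if_neg h2]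
  have hW0 : W 0 = a := by rw [hWa 0 (by omega), h10]
  have hWn : W n = a := by
    rw [hWc n (by omega)]
    have e : n - n₁ - n₂ = n₃ := by omega
    rw [e, h3n]
  have harc : ∀ i < n, A (W i) (W (i + 1)) := by
    intro i hi
    by_cases c1 : i + 1 ≤ n₁
    · rw [hWa i (by omega), hWa (i+1) c1]
      exact harc1 i (by omega)
    · by_cases c2 : n₁ ≤ i ∧ i + 1 ≤ n₁ + n₂
      · rw [hWb i c2.1 (by omega), hWb (i+1) (by omega) c2.2]
        have e : i + 1 - n₁ = (i - n₁) + 1 := by omega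
        rw [e]
        exact harc2 (i - n₁) (by omega)
      · have hc : n₁ + n₂ ≤ i := by omega
        rw [hWc i hc, hWc (i+1) (by omega)]
        have e : i + 1 - n₁ - n₂ = (i - n₁ - n₂) + 1 := by omega
        rw [e]
        exact harc3 (i - n₁ - n₂) (by omega)
  have hPW : ∀ i ≤ n, P (W i) := by
    intro i hi
    by_cases c1 : i ≤ n₁
    · rw [hWa i c1]; exact hP1 i c1
    · by_cases c2 : i ≤ n₁ + n₂
      · rw [hWb i (by omega) c2]; exact hP2 (i - n₁) (by omega)
      · rw [hWc i (by omega)]; exact hP3 (i - n₁ - n₂) (by omega)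
  refine ⟨walkSet n W, ⟨n, W, ⟨by omega, by rw [hWn, hW0], harc⟩, rfl⟩, ?_, ?_, ?_, ?_⟩
  · exact ⟨0, by omega, hW0⟩
  · have hlt : n₁ < n := by
      by_contra hcon
      have h2 : n₂ = 0 := by omega
      have h3 : n₃ = 0 := by omega
      have hbc : b = c := by rw [← h2n, h2, h20]
      have hca : c = a := by rw [← h3n, h3, h30]
      exact hab (hbc.trans hca).symm
    refine ⟨n₁, hlt, ?_⟩
    rw [hWa n₁ le_rfl, h1n]
  · by_cases h3 : n₁ + n₂ < n
    · refine ⟨n₁ + n₂, h3, ?_⟩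
      rw [hWc (n₁ + n₂) le_rfl]
      have e0 : n₁ + n₂ - n₁ - n₂ = 0 := by omega
      rw [e0, h30]
    · have h30' : n₃ = 0 := by omega
      have hca : c = a := by rw [← h3n, h30', h30]
      rw [hca]
      exact ⟨0, by omega, hW0⟩
  · rintro x ⟨i, hi, rfl⟩
    exact hPW i (by omega)

/-- Close two walks `a → b` and `b → a` into a closed walk. -/
lemma S9close2 {A : V → V → Prop} {P : V → Prop} {a b : V} (hab : a ≠ b)
    (h₁ : S9AWalk A P a b) (h₂ : S9AWalk A P b a) :
    ∃ S, IsWalkSet A S ∧ a ∈ S ∧ b ∈ S ∧ ∀ x ∈ S, P x := by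
  obtain ⟨S, hS, ha, hb, _, hP⟩ := S9close3 hab h₁ (S9AWalk.rfl' h₁.endP) h₂
  exact ⟨S, hS, ha, hb, hP⟩

lemma S9range_chain {A : V → V → Prop} {M : Set V} {w : ℕ → V} {k i j : ℕ}
    (hij : i ≤ j) (hjk : j ≤ k)
    (harc : ∀ l, i ≤ l → l < j → A (w l) (w (l + 1)))
    (hmem : ∀ l, l ≤ k → w l ∈ M) :
    Relation.ReflTransGen (fun p q => A p q ∧ q ∈ M) (w i) (w j) := by
  revert hjk harc
  induction j, hij using Nat.le_induction with
  | base => exact fun _ _ => Relation.ReflTransGen.refl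
  | succ j hij ih =>
      intro hjk harc
      exact (ih (by omega) (fun l hl1 hl2 => harc l hl1 (by omega))).tail
        ⟨harc j hij (by omega), hmem (j + 1) hjk⟩

lemma S9mem_walk {k : ℕ} {w : ℕ → V} (hk : 1 ≤ k) (hclose : w k = w 0) :
    ∀ l ≤ k, w l ∈ walkSet k w := by
  intro l hl
  rcases lt_or_eq_of_le hl with h | h
  · exact ⟨l, h, rfl⟩
  · subst h; exact ⟨0, hk, hclose.symm⟩

lemma S9ws_reach {A : V → V → Prop} {S : Set V} (hS : IsWalkSet A S) {a b : V}
    (ha : a ∈ S) (hb : b ∈ S) :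
    Relation.ReflTransGen (fun p q => A p q ∧ q ∈ S) a b := by
  obtain ⟨k, w, ⟨hk, hclose, harc⟩, rfl⟩ := hS
  obtain ⟨i, hi, rfl⟩ := ha
  obtain ⟨j, hj, rfl⟩ := hb
  have hmem := S9mem_walk hk hclose
  by_cases hij : i ≤ j
  · exact S9range_chain hij (le_of_lt hj) (fun l _ h2 => harc l (by omega)) hmem
  · have h1 : Relation.ReflTransGen (fun p q => A p q ∧ q ∈ walkSet k w) (w i) (w k) :=
      S9range_chain (by omega) le_rfl (fun l _ h2 => harc l h2) hmem
    have h2 : Relation.ReflTransGen (fun p q => A p q ∧ q ∈ walkSet k w) (w 0) (w j) :=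
      S9range_chain (by omega) (le_of_lt hj) (fun l _ h2 => harc l (by omega)) hmem
    rw [hclose] at h1
    exact h1.trans h2

lemma S9nonew {A : V → V → Prop} {u v : V} {S : Set V}
    (hS : IsWalkSet (fun a b => A a b ∨ (a = u ∧ b = v)) S)
    (h : u ∉ S ∨ v ∉ S) : IsWalkSet A S := by
  obtain ⟨k, w, ⟨hk, hclose, harc⟩, rfl⟩ := hS
  refine ⟨k, w, ⟨hk, hclose, ?_⟩, rfl⟩
  intro i hi
  rcases harc i hi with hA | ⟨hu, hv⟩
  · exact hA
  · exfalso
    have hus : u ∈ walkSet k w := ⟨i, hi, hu⟩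
    have hvs : v ∈ walkSet k w := by
      by_cases h2 : i + 1 < k
      · exact ⟨i + 1, h2, hv⟩
      · have he : i + 1 = k := by omega
        exact ⟨0, by omega, by rw [← hclose, ← he, hv]⟩
    tauto

/-- Decomposition: in a closed walk of the augmented digraph through `u` and `v`,
every vertex is reachable from `v` and reaches `u` via `A`-steps inside the set. -/
lemma S9decomp {A : V → V → Prop} {u v : V} {S : Set V}
    (hS : IsWalkSet (fun a b => A a b ∨ (a = u ∧ b = v)) S)
    (hu : u ∈ S) (hv : v ∈ S) {z : V} (hz : z ∈ S) :
    Relation.ReflTransGen (fun p q => A p q ∧ q ∈ S) v z ∧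
    Relation.ReflTransGen (fun p q => A p q ∧ q ∈ S) z u := by
  classical
  by_cases hall : IsWalkSet A S
  · exact ⟨S9ws_reach hall hv hz, S9ws_reach hall hz hu⟩
  · obtain ⟨k, w, ⟨hk, hclose, harc⟩, hSw⟩ := hS
    have hbadex : ∃ i, i < k ∧ ¬ A (w i) (w (i + 1)) := by
      by_contra hcon
      push_neg at hcon
      exact hall ⟨k, w, ⟨hk, hclose, fun i hi => hcon i hi⟩, hSw⟩
    subst hSw
    obtain ⟨i₀, hi₀, hbad₀⟩ := hbadex
    have hbadspec : ∀ i, i < k → ¬ A (w i) (w (i + 1)) → w i = u ∧ w (i + 1) = v := by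
      intro i hi hb
      rcases harc i hi with h | h
      · exact absurd h hb
      · exact h
    obtain ⟨j, hj, rfl⟩ := hz
    have hmem := S9mem_walk hk hclose
    constructor
    · -- chain from v to w j
      by_cases hcase : ∃ m, m < j ∧ ¬ A (w m) (w (m + 1))
      · -- greatest bad index below j
        set M := Nat.findGreatest (fun m => ¬ A (w m) (w (m + 1))) (j - 1) with hM
        obtain ⟨m₀, hm₀j, hm₀⟩ := hcase
        have hMspec : ¬ A (w M) (w (M + 1)) :=
          Nat.findGreatest_spec (P := fun m => ¬ A (w m) (w (m + 1))) (n := j - 1)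
            (m := m₀) (by omega) hm₀
        have hMj : M ≤ j - 1 := Nat.findGreatest_le _
        have hMlt : M < j := by omega
        have hgood : ∀ l, M + 1 ≤ l → l < j → A (w l) (w (l + 1)) := by
          intro l h1 h2
          by_contra hcon
          exact (Nat.findGreatest_is_greatest (P := fun m => ¬ A (w m) (w (m + 1)))
            (n := j - 1) (k := l) (by omega) (by omega)) hcon
        have hchain := S9range_chain (i := M + 1) (j := j) (k := k) (by omega) (by omega)
          hgood hmem
        have hMv : w (M + 1) = v := (hbadspec M (by omega) hMspec).2
        rwa [hMv] at hchain
      · push_neg at hcase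
        -- all steps below j are A-steps; use the bad step at i₀ ∈ [j, k)
        have hji₀ : j ≤ i₀ := by
          by_contra hcon
          exact hbad₀ (hcase i₀ (by omega))
        set M := Nat.findGreatest (fun m => ¬ A (w m) (w (m + 1))) (k - 1) with hM
        have hMspec : ¬ A (w M) (w (M + 1)) :=
          Nat.findGreatest_spec (P := fun m => ¬ A (w m) (w (m + 1))) (n := k - 1)
            (m := i₀) (by omega) hbad₀
        have hMk : M ≤ k - 1 := Nat.findGreatest_le _
        have hjM : j ≤ M := by
          by_contra hcon
          exact hMspec (hcase M (by omega))
        have hgood : ∀ l, M + 1 ≤ l → l < k → A (w l) (w (l + 1)) := by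
          intro l h1 h2
          by_contra hcon
          exact (Nat.findGreatest_is_greatest (P := fun m => ¬ A (w m) (w (m + 1)))
            (n := k - 1) (k := l) (by omega) (by omega)) hcon
        have hchain1 := S9range_chain (i := M + 1) (j := k) (k := k) (by omega) le_rfl
          hgood hmem
        have hchain2 := S9range_chain (i := 0) (j := j) (k := k) (by omega) (by omega)
          (fun l _ h2 => hcase l h2) hmem
        have hMv : w (M + 1) = v := (hbadspec M (by omega) hMspec).2
        rw [hMv] at hchain1
        rw [hclose] at hchain1
        exact hchain1.trans hchain2
    · -- chain from w j to u
      by_cases hcase : ∃ m, j ≤ m ∧ m < k ∧ ¬ A (w m) (w (m + 1))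
      · obtain ⟨m₀, hm₀1, hm₀2, hm₀3⟩ := hcase
        have hex : ∃ m, j ≤ m ∧ m < k ∧ ¬ A (w m) (w (m + 1)) := ⟨m₀, hm₀1, hm₀2, hm₀3⟩
        set N := Nat.find hex with hN
        obtain ⟨hN1, hN2, hN3⟩ := Nat.find_spec hex
        have hgood : ∀ l, j ≤ l → l < N → A (w l) (w (l + 1)) := by
          intro l h1 h2
          by_contra hcon
          exact Nat.find_min hex h2 ⟨h1, by omega, hcon⟩
        have hchain := S9range_chain (i := j) (j := N) (k := k) (by omega) (by omega)
          hgood hmem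
        have hNu : w N = u := (hbadspec N hN2 hN3).1
        rwa [hNu] at hchain
      · push_neg at hcase
        have hi₀j : i₀ < j := by
          by_contra hcon
          exact hbad₀ (hcase i₀ (by omega) hi₀)
        have hex : ∃ m, m < j ∧ ¬ A (w m) (w (m + 1)) := ⟨i₀, hi₀j, hbad₀⟩
        set N := Nat.find hex with hN
        obtain ⟨hN1, hN2⟩ := Nat.find_spec hex
        have hgood0 : ∀ l, 0 ≤ l → l < N → A (w l) (w (l + 1)) := by
          intro l _ h2
          by_contra hcon
          exact Nat.find_min hex h2 ⟨by omega, hcon⟩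
        have hchain1 := S9range_chain (i := j) (j := k) (k := k) (by omega) le_rfl
          (fun l h1 h2 => hcase l h1 h2) hmem
        have hchain2 := S9range_chain (i := 0) (j := N) (k := k) (by omega) (by omega)
          hgood0 hmem
        have hNu : w N = u := (hbadspec N (by omega) hN2).1
        rw [hclose] at hchain1
        rw [hNu] at hchain2
        exact hchain1.trans hchain2

lemma S9rotate {A : V → V → Prop} {S : Set V} (hS : IsWalkSet A S) {x : V} (hx : x ∈ S) :
    ∃ k w, IsClosedWalk A k w ∧ w 0 = x ∧ S = walkSet k w := by
  obtain ⟨k, w, ⟨hk, hclose, harc⟩, rfl⟩ := hS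
  obtain ⟨j, hj, rfl⟩ := hx
  set W : ℕ → V := fun i => if i < k - j then w (j + i) else w (i - (k - j)) with hW
  have hWa : ∀ i, i < k - j → W i = w (j + i) := by
    intro i hi; simp only [hW]; rw [if_pos hi]
  have hWb : ∀ i, k - j ≤ i → W i = w (i - (k - j)) := by
    intro i hi
    have : ¬ i < k - j := by omega
    simp only [hW]; rw [if_neg this]
  have hW0 : W 0 = w j := by rw [hWa 0 (by omega)]; congr 1
  have hWk : W k = w j := by
    rw [hWb k (by omega)]
    have e : k - (k - j) = j := by omega
    rw [e]
  refine ⟨k, W, ⟨hk, by rw [hWk, hW0], ?_⟩, hW0, ?_⟩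
  · intro i hi
    by_cases c1 : i + 1 < k - j
    · rw [hWa i (by omega), hWa (i + 1) c1]
      have e : j + (i + 1) = (j + i) + 1 := by omega
      rw [e]
      exact harc (j + i) (by omega)
    · by_cases c2 : i < k - j
      · -- i + 1 = k - j
        rw [hWa i c2, hWb (i + 1) (by omega)]
        have e1 : j + i = k - 1 := by omega
        have e2 : i + 1 - (k - j) = 0 := by omega
        rw [e1, e2, ← hclose]
        have e3 : k = (k - 1) + 1 := by omega
        conv_rhs => rw [e3]
        exact harc (k - 1) (by omega)
      · rw [hWb i (by omega), hWb (i + 1) (by omega)]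
        have e : i + 1 - (k - j) = (i - (k - j)) + 1 := by omega
        rw [e]
        exact harc (i - (k - j)) (by omega)
  · ext y
    constructor
    · rintro ⟨i, hi, rfl⟩
      by_cases c : j ≤ i
      · exact ⟨i - j, by omega, by rw [hWa (i - j) (by omega)]; congr 1; omega⟩
      · exact ⟨i + (k - j), by omega, by rw [hWb (i + (k - j)) (by omega)]; congr 1; omega⟩
    · rintro ⟨i, hi, rfl⟩
      by_cases c : i < k - j
      · exact ⟨j + i, by omega, (hWa i c).symm⟩
      · exact ⟨i - (k - j), by omega, (hWb i (by omega)).symm⟩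

lemma S9union2 {A : V → V → Prop} {S T : Set V} (hS : IsWalkSet A S) (hT : IsWalkSet A T)
    {x : V} (hxS : x ∈ S) (hxT : x ∈ T) : IsWalkSet A (S ∪ T) := by
  obtain ⟨k₁, w₁, ⟨hk₁, hc₁, ha₁⟩, h0₁, hS1⟩ := S9rotate hS hxS
  obtain ⟨k₂, w₂, ⟨hk₂, hc₂, ha₂⟩, h0₂, hS2⟩ := S9rotate hT hxT
  set W : ℕ → V := fun i => if i < k₁ then w₁ i else w₂ (i - k₁) with hW
  have hWa : ∀ i ≤ k₁, W i = w₁ i := by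
    intro i hi
    rcases lt_or_eq_of_le hi with h | h
    · simp only [hW]; rw [if_pos h]
    · subst h
      simp only [hW]
      rw [if_neg (lt_irrefl _), Nat.sub_self, h0₂, hc₁, h0₁]
  have hWb : ∀ i, k₁ ≤ i → W i = w₂ (i - k₁) := by
    intro i hi
    have h : ¬ i < k₁ := by omega
    simp only [hW]; rw [if_neg h]
  refine ⟨k₁ + k₂, W, ⟨by omega, ?_, ?_⟩, ?_⟩
  · rw [hWb (k₁ + k₂) (by omega), Nat.add_sub_cancel_left, hc₂, h0₂, hWa 0 (by omega), h0₁]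
  · intro i hi
    by_cases c1 : i + 1 ≤ k₁
    · rw [hWa i (by omega), hWa (i + 1) c1]
      exact ha₁ i (by omega)
    · by_cases c2 : i < k₁
      · omega
      · rw [hWb i (by omega), hWb (i + 1) (by omega)]
        have e : i + 1 - k₁ = (i - k₁) + 1 := by omega
        rw [e]
        exact ha₂ (i - k₁) (by omega)
  · rw [hS1, hS2]
    ext y
    constructor
    · rintro (⟨i, hi, rfl⟩ | ⟨i, hi, rfl⟩)
      · exact ⟨i, by omega, hWa i (by omega)⟩
      · exact ⟨k₁ + i, by omega, by rw [hWb (k₁ + i) (by omega), Nat.add_sub_cancel_left]⟩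
    · rintro ⟨i, hi, rfl⟩
      by_cases c : i < k₁
      · exact Or.inl ⟨i, c, (hWa i (by omega)).symm⟩
      · exact Or.inr ⟨i - k₁, by omega, (hWb i (by omega)).symm⟩

lemma S9finunion {A : V → V → Prop} [Finite V] {F : Set (Set V)} {p : V}
    (hne : F.Nonempty) (hall : ∀ W ∈ F, IsWalkSet A W ∧ p ∈ W) :
    IsWalkSet A (⋃₀ F) ∧ p ∈ ⋃₀ F := by
  have key : ∀ (G : Set (Set V)), G.Finite → G.Nonempty →
      (∀ W ∈ G, IsWalkSet A W ∧ p ∈ W) → IsWalkSet A (⋃₀ G) ∧ p ∈ ⋃₀ G := by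
    intro G hfin
    induction G, hfin using Set.Finite.induction_on with
    | empty => intro h _; exact absurd h (by simp)
    | @insert a s ha hs ih =>
        intro _ hall
        rcases Set.eq_empty_or_nonempty s with rfl | hsne
        · have h1 := hall a (Set.mem_insert _ _)
          rw [Set.sUnion_insert, Set.sUnion_empty, Set.union_empty]
          exact h1
        · have h1 := hall a (Set.mem_insert _ _)
          have h2 := ih hsne (fun W hW => hall W (Set.mem_insert_of_mem _ hW))
          rw [Set.sUnion_insert]
          exact ⟨S9union2 h1.1 h2.1 h1.2 h2.2, Or.inl h1.2⟩
  exact key F (Set.toFinite F) hne hall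

/-- `y` lies on every `u → v` walk of `A`. -/
def S9Unav (A : V → V → Prop) (u v y : V) : Prop :=
  ∀ (n : ℕ) (w : ℕ → V), w 0 = u → w n = v → (∀ i < n, A (w i) (w (i + 1))) →
    ∃ i ≤ n, w i = y

lemma S9unav_mem {A : V → V → Prop} {u v y : V} (hy : S9Unav A u v y) {K : Set V}
    (hK : IsWalkSet A K) (huK : u ∈ K) (hvK : v ∈ K) : y ∈ K := by
  have h := S9rtg_awalk (A := A) (S9ws_reach hK huK hvK)
  obtain ⟨n, w, h0, hn, harc, hP⟩ := h
  obtain ⟨i, hi, hiy⟩ := hy n w h0 hn (fun i hi => harc i hi)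
  rcases hP i hi with he | hm
  · rw [← hiy, he]; exact huK
  · exact hiy ▸ hm

lemma S9true_walk {A : V → V → Prop} {u v : V} (h : Relation.ReflTransGen A u v) :
    S9AWalk A (fun _ => True) u v :=
  (S9rtg_awalk (A := A) (Q := fun _ => True)
    (Relation.ReflTransGen.mono (p := fun p q => A p q ∧ True) (fun _ _ h => ⟨h, trivial⟩) _ _ h)).mono (by simp)

lemma S9alpha {A : V → V → Prop} {u v y : V} (hstrong : Relation.ReflTransGen A u v)
    (hy : S9Unav A u v y) (hyv : y ≠ v) : S9AWalk A (fun x => x ≠ v) u y := by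
  classical
  obtain ⟨n, w, h0, hn, harc, -⟩ := S9true_walk hstrong
  have hex : ∃ m, w m = v ∧ m ≤ n := ⟨n, hn, le_rfl⟩
  obtain ⟨hmv, hmn⟩ := Nat.find_spec hex
  set m := Nat.find hex with hm
  obtain ⟨j, hj, hjy⟩ := hy m w h0 hmv (fun i hi => harc i (by omega))
  have hjm : j ≠ m := fun he => hyv (by rw [← hjy, he, hmv])
  refine ⟨j, w, h0, hjy, fun i hi => harc i (by omega), ?_⟩
  intro i hi hcon
  exact Nat.find_min hex (m := i) (by omega) ⟨hcon, by omega⟩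

lemma S9delta {A : V → V → Prop} {u v y : V} (hstrong : Relation.ReflTransGen A u v)
    (hy : S9Unav A u v y) (hyu : y ≠ u) : S9AWalk A (fun x => x ≠ u) y v := by
  classical
  obtain ⟨n, w, h0, hn, harc, -⟩ := S9true_walk hstrong
  set m := Nat.findGreatest (fun l => w l = u) n with hm
  have hmu : w m = u :=
    Nat.findGreatest_spec (P := fun l => w l = u) (n := n) (m := 0) (by omega) h0
  have hmn : m ≤ n := Nat.findGreatest_le n
  have hgr : ∀ l, m < l → l ≤ n → w l ≠ u := fun l h1 h2 =>
    Nat.findGreatest_is_greatest (P := fun l => w l = u) (n := n) h1 h2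
  obtain ⟨j, hj, hjy⟩ := hy (n - m) (fun i => w (m + i)) (by simpa using hmu)
    (by have e : m + (n - m) = n := by omega
        simp only [e, hn])
    (fun i hi => by
      show A (w (m + i)) (w (m + (i + 1)))
      have e : m + (i + 1) = (m + i) + 1 := by omega
      rw [e]
      exact harc (m + i) (by omega))
  have hj0 : j ≠ 0 := by
    intro he
    subst he
    exact hyu (by rw [← hjy]; simpa using hmu)
  refine ⟨n - m - j, fun i => w (m + j + i), by simpa using hjy, ?_, ?_, ?_⟩
  · show w (m + j + (n - m - j)) = v
    have e : m + j + (n - m - j) = n := by omega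
    rw [e, hn]
  · intro i hi
    show A (w (m + j + i)) (w (m + j + (i + 1)))
    have e : m + j + (i + 1) = (m + j + i) + 1 := by omega
    rw [e]
    exact harc (m + j + i) (by omega)
  · intro i hi
    exact hgr (m + j + i) (by omega) (by omega)

lemma S9extL {A : V → V → Prop} {u v : V} {S : Set V} {a z : V}
    (h : Relation.ReflTransGen (fun p q => A p q ∧ q ∈ S) a z)
    (ha : a = u ∨ a = v) (hz : z ≠ u ∧ z ≠ v) :
    ∃ b, (b = u ∨ b = v) ∧
      Relation.ReflTransGen (fun p q => A p q ∧ q ∈ S ∧ q ≠ u ∧ q ≠ v) b z := by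
  revert hz
  induction h with
  | refl =>
      intro hz
      rcases ha with h | h
      · exact absurd h hz.1
      · exact absurd h hz.2
  | @tail p q hap hstep ih =>
      intro hq
      by_cases hp : p = u ∨ p = v
      · exact ⟨p, hp, Relation.ReflTransGen.single ⟨hstep.1, hstep.2, hq.1, hq.2⟩⟩
      · push_neg at hp
        obtain ⟨b, hb, hch⟩ := ih hp
        exact ⟨b, hb, hch.tail ⟨hstep.1, hstep.2, hq.1, hq.2⟩⟩

lemma S9extR {A : V → V → Prop} {u v : V} {S : Set V} {z e : V}
    (h : Relation.ReflTransGen (fun p q => A p q ∧ q ∈ S) z e)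
    (he : e = u ∨ e = v) (hz : z ≠ u ∧ z ≠ v) :
    ∃ b, (b = u ∨ b = v) ∧
      Relation.ReflTransGen (fun p q => A p q ∧ q ∈ S ∧ ((q ≠ u ∧ q ≠ v) ∨ q = b)) z b := by
  revert hz
  induction h using Relation.ReflTransGen.head_induction_on with
  | refl =>
      intro hz
      rcases he with h | h
      · exact absurd h hz.1
      · exact absurd h hz.2
  | @head p c hstep hrest ih =>
      intro hp
      by_cases hc : c = u ∨ c = v
      · exact ⟨c, hc, Relation.ReflTransGen.single ⟨hstep.1, hstep.2, Or.inr rfl⟩⟩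
      · push_neg at hc
        obtain ⟨b, hb, hch⟩ := ih hc
        exact ⟨b, hb, hch.head ⟨hstep.1, hstep.2, Or.inl hc⟩⟩

/-- If `S` is a walk set of the augmented digraph containing `u, v` and `C` is a walk set
of `A` containing `u, v`, then `S ∪ C` is a walk set of `A`. -/
lemma S9glue {A : V → V → Prop} {u v : V} [Finite V] (huv : u ≠ v) {S C : Set V}
    (hS : IsWalkSet (fun a b => A a b ∨ (a = u ∧ b = v)) S) (huS : u ∈ S) (hvS : v ∈ S)
    (hC : IsWalkSet A C) (huC : u ∈ C) (hvC : v ∈ C) :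
    IsWalkSet A (S ∪ C) := by
  classical
  have hLz : ∀ z ∈ S, ∃ L, IsWalkSet A L ∧ u ∈ L ∧ z ∈ L ∧ L ⊆ S ∪ C := by
    intro z hz
    obtain ⟨hvz, hzu⟩ := S9decomp hS huS hvS hz
    have h1 : S9AWalk A (fun x => x ∈ S ∪ C) u v :=
      (S9rtg_awalk (A := A) (S9ws_reach hC huC hvC)).mono
        (by rintro x (rfl | h); exacts [Or.inr huC, Or.inr h])
    have h2 : S9AWalk A (fun x => x ∈ S ∪ C) v z :=
      (S9rtg_awalk (A := A) hvz).mono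
        (by rintro x (rfl | h); exacts [Or.inl hvS, Or.inl h])
    have h3 : S9AWalk A (fun x => x ∈ S ∪ C) z u :=
      (S9rtg_awalk (A := A) hzu).mono
        (by rintro x (rfl | h); exacts [Or.inl hz, Or.inl h])
    obtain ⟨Lz, hL, huL, hvL, hzL, hP⟩ := S9close3 huv h1 h2 h3
    exact ⟨Lz, hL, huL, hzL, fun x hx => hP x hx⟩
  choose! L hLws hLu hLmem hLsub using hLz
  set F : Set (Set V) := insert C {X | ∃ z ∈ S, X = L z} with hF
  have hall : ∀ W ∈ F, IsWalkSet A W ∧ u ∈ W := by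
    intro W hW
    rcases hW with rfl | ⟨z, hz, rfl⟩
    · exact ⟨hC, huC⟩
    · exact ⟨hLws z hz, hLu z hz⟩
  have hfam := S9finunion (A := A) ⟨C, Set.mem_insert _ _⟩ hall
  have heq : ⋃₀ F = S ∪ C := by
    apply Set.Subset.antisymm
    · rintro x ⟨W, hW, hxW⟩
      rcases hW with rfl | ⟨z, hz, rfl⟩
      · exact Or.inr hxW
      · exact hLsub z hz hxW
    · rintro x (hx | hx)
      · exact ⟨L x, Or.inr ⟨x, hx, rfl⟩, hLmem x hx⟩
      · exact ⟨C, Or.inl rfl, hx⟩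
  rw [← heq]
  exact hfam.1

/-- Assembly: given a "repair" `W S T` for every pair of a `{u,v}`-containing member `S`
and a `{u,v}`-avoiding member `T`, all anchored at `p`, conclude via Helly for `A`. -/
lemma S9assemble [Fintype V] (A : V → V → Prop) (hH : WalkHelly A) (u v p : V)
    (𝒮 : Set (Set V)) (hne : 𝒮.Nonempty)
    (hws' : ∀ X ∈ 𝒮, (u ∉ X ∨ v ∉ X) → IsWalkSet A X)
    (hpair : ∀ S ∈ 𝒮, ∀ S' ∈ 𝒮, (S ∩ S').Nonempty)
    (hfirstp : ∀ X ∈ 𝒮, (u ∉ X ∨ v ∉ X) → ¬(u ∉ X ∧ v ∉ X) → p ∈ X)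
    (hW : ∀ S T, S ∈ 𝒮 → u ∈ S → v ∈ S → T ∈ 𝒮 → u ∉ T → v ∉ T →
       ∃ Wst, IsWalkSet A Wst ∧ Wst ⊆ S ∧ p ∈ Wst ∧ (Wst ∩ T).Nonempty)
    (hNex : ∃ T ∈ 𝒮, u ∉ T ∧ v ∉ T) :
    (⋂₀ 𝒮).Nonempty := by
  classical
  obtain ⟨Sc, hSc, hScu, hScv⟩ := hNex
  have hW' : ∀ S T : Set V, ∃ Wst, (S ∈ 𝒮 → u ∈ S → v ∈ S → T ∈ 𝒮 → u ∉ T → v ∉ T →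
      IsWalkSet A Wst ∧ Wst ⊆ S ∧ p ∈ Wst ∧ (Wst ∩ T).Nonempty) := by
    intro S T
    by_cases hc : S ∈ 𝒮 ∧ u ∈ S ∧ v ∈ S ∧ T ∈ 𝒮 ∧ u ∉ T ∧ v ∉ T
    · obtain ⟨h1, h2, h3, h4, h5, h6⟩ := hc
      obtain ⟨Wst, hw⟩ := hW S T h1 h2 h3 h4 h5 h6
      exact ⟨Wst, fun _ _ _ _ _ _ => hw⟩
    · exact ⟨∅, fun a b c d e f => absurd ⟨a, b, c, d, e, f⟩ hc⟩
  choose W hWspec using hW'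
  set Ncl : Set (Set V) := {T | T ∈ 𝒮 ∧ u ∉ T ∧ v ∉ T} with hNcl
  have hScN : Sc ∈ Ncl := ⟨hSc, hScu, hScv⟩
  -- the union of repairs for a fixed S
  have hUnion : ∀ S, S ∈ 𝒮 → u ∈ S → v ∈ S →
      IsWalkSet A (⋃₀ (W S '' Ncl)) ∧ p ∈ ⋃₀ (W S '' Ncl) := by
    intro S hS huS hvS
    refine S9finunion ⟨W S Sc, ⟨Sc, hScN, rfl⟩⟩ ?_
    rintro X ⟨T, hT, rfl⟩
    obtain ⟨hw1, _, hw3, _⟩ := hWspec S T hS huS hvS hT.1 hT.2.1 hT.2.2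
    exact ⟨hw1, hw3⟩
  set 𝒢 : Set (Set V) := {X | X ∈ 𝒮 ∧ (u ∉ X ∨ v ∉ X)} ∪
      {X | ∃ S, (S ∈ 𝒮 ∧ u ∈ S ∧ v ∈ S) ∧ X = ⋃₀ (W S '' Ncl)} with h𝒢
  have hq : (⋂₀ 𝒢).Nonempty := by
    refine hH 𝒢 ⟨Sc, Or.inl ⟨hSc, Or.inl hScu⟩⟩ ?_ ?_
    · rintro X (⟨hX, hX2⟩ | ⟨S, ⟨hS, huS, hvS⟩, rfl⟩)
      · exact hws' X hX hX2
      · exact (hUnion S hS huS hvS).1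
    · rintro X hX X' hX'
      have hXsub : ∀ Y, Y ∈ 𝒢 → (Y ∈ 𝒮 ∧ (u ∉ Y ∨ v ∉ Y)) ∨
          (p ∈ Y ∧ ∀ T ∈ Ncl, (Y ∩ T).Nonempty) := by
        rintro Y (⟨hY, hY2⟩ | ⟨S, ⟨hS, huS, hvS⟩, rfl⟩)
        · exact Or.inl ⟨hY, hY2⟩
        · refine Or.inr ⟨(hUnion S hS huS hvS).2, ?_⟩
          intro T hT
          obtain ⟨hw1, _, _, hw4⟩ := hWspec S T hS huS hvS hT.1 hT.2.1 hT.2.2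
          exact hw4.mono (fun x hx => ⟨⟨W S T, ⟨T, hT, rfl⟩, hx.1⟩, hx.2⟩)
      rcases hXsub X hX with ⟨hX1, hX2⟩ | ⟨hXp, hXN⟩
      · rcases hXsub X' hX' with ⟨hX'1, hX'2⟩ | ⟨hX'p, hX'N⟩
        · exact hpair X hX1 X' hX'1
        · by_cases hN : u ∉ X ∧ v ∉ X
          · exact ((hX'N X ⟨hX1, hN.1, hN.2⟩).mono (fun x hx => ⟨hx.2, hx.1⟩))
          · exact ⟨p, hfirstp X hX1 hX2 hN, hX'p⟩
      · rcases hXsub X' hX' with ⟨hX'1, hX'2⟩ | ⟨hX'p, hX'N⟩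
        · by_cases hN : u ∉ X' ∧ v ∉ X'
          · exact hXN X' ⟨hX'1, hN.1, hN.2⟩
          · exact ⟨p, hXp, hfirstp X' hX'1 hX'2 hN⟩
        · exact ⟨p, hXp, hX'p⟩
  obtain ⟨q, hq⟩ := hq
  refine ⟨q, ?_⟩
  intro S hS
  by_cases hc : u ∈ S ∧ v ∈ S
  · have hmem : ⋃₀ (W S '' Ncl) ∈ 𝒢 := Or.inr ⟨S, ⟨hS, hc.1, hc.2⟩, rfl⟩
    have hqin := hq _ hmem
    obtain ⟨X, ⟨T, hT, rfl⟩, hqX⟩ := hqin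
    exact (hWspec S T hS hc.1 hc.2 hT.1 hT.2.1 hT.2.2).2.1 hqX
  · have h2 : u ∉ S ∨ v ∉ S := by tauto
    exact hq S (Or.inl ⟨hS, h2⟩)

/-- Main lemma: the Helly property for a pairwise-intersecting family of walk sets of the
augmented digraph, under the extra hypothesis that no member contains `v` without `u`. -/
lemma S9main {V : Type*} [Fintype V] (A : V → V → Prop)
    (hstrong : ∀ a b : V, Relation.ReflTransGen A a b)
    (hH : WalkHelly A) (u v : V) (huv : u ≠ v)
    (hauth : IsAuthorized A u v)
    (𝒮 : Set (Set V)) (hne : 𝒮.Nonempty)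
    (hws : ∀ S ∈ 𝒮, IsWalkSet (fun a b => A a b ∨ (a = u ∧ b = v)) S)
    (hpair : ∀ S ∈ 𝒮, ∀ S' ∈ 𝒮, (S ∩ S').Nonempty)
    (hNov : ∀ S ∈ 𝒮, v ∈ S → u ∈ S) :
    (⋂₀ 𝒮).Nonempty := by
  classical
  by_cases hNex : ∃ T ∈ 𝒮, u ∉ T ∧ v ∉ T
  case neg =>
    push_neg at hNex
    refine ⟨u, ?_⟩
    intro S hS
    by_cases hu : u ∈ S
    · exact hu
    · exact absurd (hNov S hS (hNex S hS hu)) hu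
  obtain ⟨Sc, hSc, hScu, hScv⟩ := hNex
  -- first Helly application
  set ℱ : Set (Set V) := {X | X ∈ 𝒮 ∧ (u ∉ X ∨ v ∉ X)} ∪
      {X | ∃ S, (S ∈ 𝒮 ∧ u ∈ S ∧ v ∈ S) ∧
        ∃ C, (IsWalkSet A C ∧ u ∈ C ∧ v ∈ C) ∧ X = S ∪ C} with hℱ
  obtain ⟨C₀, hC₀ws, huC₀, hvC₀, -⟩ :=
    S9close2 huv (S9true_walk (hstrong u v)) (S9true_walk (hstrong v u))
  have hyex : (⋂₀ ℱ).Nonempty := by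
    refine hH ℱ ⟨Sc, Or.inl ⟨hSc, Or.inl hScu⟩⟩ ?_ ?_
    · rintro X (⟨hX, hX2⟩ | ⟨S, ⟨hS, huS, hvS⟩, C, ⟨hCws, huC, hvC⟩, rfl⟩)
      · exact S9nonew (hws X hX) hX2
      · exact S9glue huv (hws S hS) huS hvS hCws huC hvC
    · have hXsub : ∀ Y, Y ∈ ℱ → (Y ∈ 𝒮) ∨ (u ∈ Y ∧ ∃ S ∈ 𝒮, S ⊆ Y) := by
        rintro Y (⟨hY, _⟩ | ⟨S, ⟨hS, huS, _⟩, C, _, rfl⟩)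
        · exact Or.inl hY
        · exact Or.inr ⟨Or.inl huS, S, hS, Set.subset_union_left⟩
      rintro X hX X' hX'
      rcases hXsub X hX with hX1 | ⟨hXu, S, hS, hSsub⟩
      · rcases hXsub X' hX' with hX'1 | ⟨hX'u, S', hS', hS'sub⟩
        · exact hpair X hX1 X' hX'1
        · exact (hpair X hX1 S' hS').mono (fun x hx => ⟨hx.1, hS'sub hx.2⟩)
      · rcases hXsub X' hX' with hX'1 | ⟨hX'u, S', hS', hS'sub⟩
        · exact (hpair S hS X' hX'1).mono (fun x hx => ⟨hSsub hx.1, hx.2⟩)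
        · exact ⟨u, hXu, hX'u⟩
  obtain ⟨y, hy⟩ := hyex
  have hyMem : ∀ S ∈ 𝒮, (u ∉ S ∨ v ∉ S) → y ∈ S :=
    fun S hS h => hy _ (Or.inl ⟨hS, h⟩)
  have hySC : ∀ S, S ∈ 𝒮 → u ∈ S → v ∈ S → ∀ C, IsWalkSet A C → u ∈ C → v ∈ C →
      y ∈ S ∪ C := fun S hS h1 h2 C hC h3 h4 =>
    hy _ (Or.inr ⟨S, ⟨hS, h1, h2⟩, C, ⟨hC, h3, h4⟩, rfl⟩)
  by_cases hgood : ∀ S ∈ 𝒮, u ∈ S → v ∈ S → y ∈ S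
  case pos =>
    refine ⟨y, ?_⟩
    intro S hS
    by_cases hc : u ∈ S ∧ v ∈ S
    · exact hgood S hS hc.1 hc.2
    · exact hyMem S hS (by tauto)
  push_neg at hgood
  obtain ⟨S₀, hS₀, huS₀, hvS₀, hbad⟩ := hgood
  have hyu : y ≠ u := fun he => hbad (he ▸ huS₀)
  have hyv : y ≠ v := fun he => hbad (he ▸ hvS₀)
  -- y is unavoidable on u → v walks
  have hUnav : S9Unav A u v y := by
    intro n w h0 hn harc
    by_contra hcon
    push_neg at hcon
    have hchain := (S9decomp (hws S₀ hS₀) huS₀ hvS₀ huS₀).1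
    have hY : S9AWalk A (fun x => x ≠ y ∨ x ∈ S₀) v u :=
      (S9rtg_awalk (A := A) hchain).mono
        (by rintro x (rfl | h); exacts [Or.inr hvS₀, Or.inr h])
    have hQ : S9AWalk A (fun x => x ≠ y ∨ x ∈ S₀) u v :=
      ⟨n, w, h0, hn, harc, fun i hi => Or.inl (hcon i hi)⟩
    obtain ⟨C, hCws, huC, hvC, hP⟩ := S9close2 huv hQ hY
    rcases hySC S₀ hS₀ huS₀ hvS₀ C hCws huC hvC with h | h
    · exact hbad h
    · rcases hP y h with h' | h'
      · exact h' rfl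
      · exact hbad h'
  have hAlpha : S9AWalk A (fun x => x ≠ v) u y := S9alpha (hstrong u v) hUnav hyv
  have hDelta : S9AWalk A (fun x => x ≠ u) y v := S9delta (hstrong u v) hUnav hyu
  -- walks between y and N-type members
  have hyT : ∀ T, T ∈ 𝒮 → u ∉ T → v ∉ T → y ∈ T :=
    fun T h1 h2 _ => hyMem T h1 (Or.inl h2)
  have hTzy : ∀ T, T ∈ 𝒮 → u ∉ T → v ∉ T → ∀ z ∈ T,
      S9AWalk A (fun x => x ≠ u ∧ x ≠ v) z y := by
    intro T hT hTu hTv z hz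
    have hTws : IsWalkSet A T := S9nonew (hws T hT) (Or.inl hTu)
    refine (S9rtg_awalk (A := A) (S9ws_reach hTws hz (hyT T hT hTu hTv))).mono ?_
    rintro x (rfl | h)
    · exact ⟨fun he => hTu (he ▸ hz), fun he => hTv (he ▸ hz)⟩
    · exact ⟨fun he => hTu (he ▸ h), fun he => hTv (he ▸ h)⟩
  have hTyz : ∀ T, T ∈ 𝒮 → u ∉ T → v ∉ T → ∀ z ∈ T,
      S9AWalk A (fun x => x ≠ u ∧ x ≠ v) y z := by
    intro T hT hTu hTv z hz
    have hTws : IsWalkSet A T := S9nonew (hws T hT) (Or.inl hTu)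
    refine (S9rtg_awalk (A := A) (S9ws_reach hTws (hyT T hT hTu hTv) hz)).mono ?_
    rintro x (rfl | h)
    · exact ⟨hyu, hyv⟩
    · exact ⟨fun he => hTu (he ▸ h), fun he => hTv (he ▸ h)⟩
  -- walk from v to u inside a B-type member
  have hvu_in : ∀ S, S ∈ 𝒮 → u ∈ S → v ∈ S → S9AWalk A (fun x => x ∈ S) v u := by
    intro S hS huS hvS
    refine (S9rtg_awalk (A := A) (S9decomp (hws S hS) huS hvS huS).1).mono ?_
    rintro x (rfl | h)
    exacts [hvS, h]
  -- producing witnesses for `y ∈ Z_u` and `y ∈ Z_v`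
  have hPu_mk : ∀ T, T ∈ 𝒮 → u ∉ T → v ∉ T → ∀ z, z ∈ T →
      S9AWalk A (fun x => x ≠ v) z u →
      ∃ Wit, IsWalkSet A Wit ∧ u ∈ Wit ∧ y ∈ Wit ∧ v ∉ Wit := by
    intro T hT hTu hTv z hz c1
    have hzu : z ≠ u := fun he => hTu (he ▸ hz)
    have c3 : S9AWalk A (fun x => x ≠ v) y z :=
      (hTyz T hT hTu hTv z hz).mono (fun x h => h.2)
    obtain ⟨W, hW, hzW, huW, hyW, hP⟩ := S9close3 hzu c1 hAlpha c3
    exact ⟨W, hW, huW, hyW, fun hv => (hP v hv) rfl⟩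
  have hPv_mk : ∀ T, T ∈ 𝒮 → u ∉ T → v ∉ T → ∀ z, z ∈ T →
      S9AWalk A (fun x => x ≠ u) v z →
      ∃ Wit, IsWalkSet A Wit ∧ v ∈ Wit ∧ y ∈ Wit ∧ u ∉ Wit := by
    intro T hT hTu hTv z hz c1
    have hzv : z ≠ v := fun he => hTv (he ▸ hz)
    have c2 : S9AWalk A (fun x => x ≠ u) z y :=
      (hTzy T hT hTu hTv z hz).mono (fun x h => h.1)
    obtain ⟨W, hW, hvW, hzW, hyW, hP⟩ := S9close3 (Ne.symm hzv) c1 c2 hDelta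
    exact ⟨W, hW, hvW, hyW, fun hu => (hP u hu) rfl⟩
  -- extraction of walks inside a B-type member around a common point with an N-type member
  have hext : ∀ S, S ∈ 𝒮 → u ∈ S → v ∈ S → ∀ T, T ∈ 𝒮 → u ∉ T → v ∉ T →
      ∀ z, z ∈ S → z ∈ T →
      (S9AWalk A (fun x => x ∈ S ∧ x ≠ u) v z ∨ S9AWalk A (fun x => x ∈ S ∧ x ≠ v) u z) ∧
      (S9AWalk A (fun x => x ∈ S ∧ x ≠ v) z u ∨ S9AWalk A (fun x => x ∈ S ∧ x ≠ u) z v) := by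
    intro S hS huS hvS T hT hTu hTv z hzS hzT
    have hzu : z ≠ u := fun he => hTu (he ▸ hzT)
    have hzv : z ≠ v := fun he => hTv (he ▸ hzT)
    obtain ⟨hvz, hzu'⟩ := S9decomp (hws S hS) huS hvS hzS
    constructor
    · obtain ⟨b, hb, hch⟩ := S9extL hvz (Or.inr rfl) ⟨hzu, hzv⟩
      have hw := S9rtg_awalk (A := A) hch
      rcases hb with rfl | rfl
      · refine Or.inr (hw.mono ?_)
        rintro x (rfl | h)
        · exact ⟨huS, huv⟩
        · exact ⟨h.1, h.2.2⟩
      · refine Or.inl (hw.mono ?_)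
        rintro x (rfl | h)
        · exact ⟨hvS, Ne.symm huv⟩
        · exact ⟨h.1, h.2.1⟩
    · obtain ⟨b, hb, hch⟩ := S9extR hzu' (Or.inl rfl) ⟨hzu, hzv⟩
      have hw := S9rtg_awalk (A := A) hch
      rcases hb with rfl | rfl
      · refine Or.inl (hw.mono ?_)
        rintro x (rfl | h)
        · exact ⟨hzS, hzv⟩
        · refine ⟨h.1, ?_⟩
          rcases h.2 with h2 | h2
          · exact h2.2
          · exact h2 ▸ huv
      · refine Or.inr (hw.mono ?_)
        rintro x (rfl | h)
        · exact ⟨hzS, hzu⟩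
        · refine ⟨h.1, ?_⟩
          rcases h.2 with h2 | h2
          · exact h2.1
          · exact h2 ▸ (Ne.symm huv)
  -- either y ∈ Z_u or y ∈ Z_v
  have hPuPv : (∃ W, IsWalkSet A W ∧ u ∈ W ∧ y ∈ W ∧ v ∉ W) ∨
      (∃ W, IsWalkSet A W ∧ v ∈ W ∧ y ∈ W ∧ u ∉ W) := by
    obtain ⟨z, hzS₀, hzSc⟩ := hpair S₀ hS₀ Sc hSc
    obtain ⟨hL, hR⟩ := hext S₀ hS₀ huS₀ hvS₀ Sc hSc hScu hScv z hzS₀ hzSc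
    rcases hR with hRu | hRv
    · exact Or.inl (hPu_mk Sc hSc hScu hScv z hzSc (hRu.mono fun x h => h.2))
    · rcases hL with hLv | hLu
      · exact Or.inr (hPv_mk Sc hSc hScu hScv z hzSc (hLv.mono fun x h => h.2))
      · exfalso
        have hzu : z ≠ u := fun he => hScu (he ▸ hzSc)
        obtain ⟨K, hK, huK, hzK, hvK, hPK⟩ := S9close3 (Ne.symm hzu)
          (hLu.mono fun x h => h.1) (hRv.mono fun x h => h.1) (hvu_in S₀ hS₀ huS₀ hvS₀)
        exact hbad (hPK y (S9unav_mem hUnav hK huK hvK))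
  rcases hPuPv with hPu | hPv
  · -- case y ∈ Z_u
    have hnPv : ¬ ∃ W, IsWalkSet A W ∧ v ∈ W ∧ y ∈ W ∧ u ∉ W := fun h => hauth ⟨y, hPu, h⟩
    refine S9assemble A hH u v u 𝒮 hne (fun X hX h2 => S9nonew (hws X hX) h2) hpair ?_ ?_
      ⟨Sc, hSc, hScu, hScv⟩
    · intro X hX h2 hN
      rcases h2 with h | h
      · by_cases hv : v ∈ X
        · exact hNov X hX hv
        · exact absurd ⟨h, hv⟩ hN
      · by_cases hu : u ∈ X
        · exact hu
        · exact absurd ⟨hu, h⟩ hN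
    · intro S T hS huS hvS hT hTu hTv
      obtain ⟨z, hzS, hzT⟩ := hpair S hS T hT
      obtain ⟨hL, hR⟩ := hext S hS huS hvS T hT hTu hTv z hzS hzT
      have hzu : z ≠ u := fun he => hTu (he ▸ hzT)
      have hLu : S9AWalk A (fun x => x ∈ S ∧ x ≠ v) u z := by
        rcases hL with hLv | hLu
        · exact absurd (hPv_mk T hT hTu hTv z hzT (hLv.mono fun x h => h.2)) hnPv
        · exact hLu
      rcases hR with hRu | hRv
      · obtain ⟨W, hW, huW, hzW, hPW⟩ :=
          S9close2 (Ne.symm hzu) (hLu.mono fun x h => h.1) (hRu.mono fun x h => h.1)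
        exact ⟨W, hW, fun x hx => hPW x hx, huW, ⟨z, hzW, hzT⟩⟩
      · obtain ⟨W, hW, huW, hzW, hvW, hPW⟩ := S9close3 (Ne.symm hzu)
          (hLu.mono fun x h => h.1) (hRv.mono fun x h => h.1) (hvu_in S hS huS hvS)
        exact ⟨W, hW, fun x hx => hPW x hx, huW, ⟨z, hzW, hzT⟩⟩
  · -- case y ∈ Z_v
    have hnPu : ¬ ∃ W, IsWalkSet A W ∧ u ∈ W ∧ y ∈ W ∧ v ∉ W := fun h => hauth ⟨y, h, hPv⟩
    have hUe : ∀ S ∈ 𝒮, u ∈ S → v ∈ S := by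
      intro S hS huS
      by_contra hvS
      exact hnPu ⟨S, S9nonew (hws S hS) (Or.inr hvS), huS, hyMem S hS (Or.inr hvS), hvS⟩
    refine S9assemble A hH u v v 𝒮 hne (fun X hX h2 => S9nonew (hws X hX) h2) hpair ?_ ?_
      ⟨Sc, hSc, hScu, hScv⟩
    · intro X hX h2 hN
      rcases h2 with h | h
      · by_cases hv : v ∈ X
        · exact hv
        · exact absurd ⟨h, hv⟩ hN
      · by_cases hu : u ∈ X
        · exact absurd (hUe X hX hu) h
        · exact absurd ⟨hu, h⟩ hN
    · intro S T hS huS hvS hT hTu hTv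
      obtain ⟨z, hzS, hzT⟩ := hpair S hS T hT
      obtain ⟨hL, hR⟩ := hext S hS huS hvS T hT hTu hTv z hzS hzT
      have hzu : z ≠ u := fun he => hTu (he ▸ hzT)
      have hzv : z ≠ v := fun he => hTv (he ▸ hzT)
      have hRv : S9AWalk A (fun x => x ∈ S ∧ x ≠ u) z v := by
        rcases hR with hRu | hRv
        · exact absurd (hPu_mk T hT hTu hTv z hzT (hRu.mono fun x h => h.2)) hnPu
        · exact hRv
      rcases hL with hLv | hLu
      · obtain ⟨W, hW, hvW, hzW, hPW⟩ :=
          S9close2 (Ne.symm hzv) (hLv.mono fun x h => h.1) (hRv.mono fun x h => h.1)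
        exact ⟨W, hW, fun x hx => hPW x hx, hvW, ⟨z, hzW, hzT⟩⟩
      · obtain ⟨W, hW, huW, hzW, hvW, hPW⟩ := S9close3 (Ne.symm hzu)
          (hLu.mono fun x h => h.1) (hRv.mono fun x h => h.1) (hvu_in S hS huS hvS)
        exact ⟨W, hW, fun x hx => hPW x hx, hvW, ⟨z, hzW, hzT⟩⟩

lemma S9walkset_congr {A B : V → V → Prop} (h : ∀ a b, A a b ↔ B a b) {S : Set V}
    (hS : IsWalkSet A S) : IsWalkSet B S := by
  obtain ⟨k, w, ⟨hk, hc, ha⟩, rfl⟩ := hS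
  exact ⟨k, w, ⟨hk, hc, fun i hi => (h _ _).mp (ha i hi)⟩, rfl⟩

lemma S9walkset_rev {A : V → V → Prop} {S : Set V} (hS : IsWalkSet A S) :
    IsWalkSet (fun a b => A b a) S := by
  obtain ⟨k, w, ⟨hk, hc, ha⟩, rfl⟩ := hS
  refine ⟨k, fun i => w (k - i), ⟨hk, ?_, ?_⟩, ?_⟩
  · show w (k - k) = w (k - 0)
    simpa using hc.symm
  · intro i hi
    show A (w (k - (i + 1))) (w (k - i))
    have e1 : k - i = (k - (i + 1)) + 1 := by omega
    rw [e1]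
    exact ha (k - (i + 1)) (by omega)
  · ext x
    constructor
    · rintro ⟨j, hj, rfl⟩
      by_cases h0 : j = 0
      · subst h0
        refine ⟨0, by omega, ?_⟩
        show w (k - 0) = w 0
        simpa using hc
      · refine ⟨k - j, by omega, ?_⟩
        show w (k - (k - j)) = w j
        congr 1
        omega
    · rintro ⟨i, hi, rfl⟩
      by_cases h0 : i = 0
      · subst h0
        refine ⟨0, by omega, ?_⟩
        show w 0 = w (k - 0)
        simpa using hc.symm
      · exact ⟨k - i, by omega, rfl⟩

lemma S9helly_rev {A : V → V → Prop} (hH : WalkHelly A) : WalkHelly (fun a b => A b a) := by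
  intro 𝒮 h1 h2 h3
  exact hH 𝒮 h1 (fun S hS => S9walkset_rev (h2 S hS)) h3

lemma S9auth_rev {A : V → V → Prop} {u v : V} (h : IsAuthorized A u v) :
    IsAuthorized (fun a b => A b a) v u := by
  rintro ⟨x, ⟨S1, h1, hv1, hx1, hu1⟩, ⟨S2, h2, hu2, hx2, hv2⟩⟩
  exact h ⟨x, ⟨S2, S9walkset_rev h2, hu2, hx2, hv2⟩, ⟨S1, S9walkset_rev h1, hv1, hx1, hu1⟩⟩

lemma S9rtg_rev {A : V → V → Prop} {a b : V} (h : Relation.ReflTransGen A a b) :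
    Relation.ReflTransGen (fun p q => A q p) b a := by
  induction h with
  | refl => exact Relation.ReflTransGen.refl
  | tail h1 h2 ih => exact Relation.ReflTransGen.head h2 ih


/-- adding an authorized arc `(u, v)` to a strongly connected walk-Helly
digraph preserves the walk-Helly property. -/
theorem stmt9 {V : Type*} [Fintype V] (A : V → V → Prop)
    (hstrong : ∀ u v : V, Relation.ReflTransGen A u v)
    (hH : WalkHelly A) (u v : V) (huv : u ≠ v)
    (hauth : IsAuthorized A u v) :
    WalkHelly (fun a b => A a b ∨ (a = u ∧ b = v)) := by
  intro 𝒮 hne hws hpair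
  by_cases hNov : ∀ S ∈ 𝒮, v ∈ S → u ∈ S
  · exact S9main A hstrong hH u v huv hauth 𝒮 hne hws hpair hNov
  · push_neg at hNov
    obtain ⟨S₁, hS₁, hvS₁, huS₁⟩ := hNov
    have hNou : ∀ S ∈ 𝒮, u ∈ S → v ∈ S := by
      intro S hS huS
      by_contra hvS
      obtain ⟨x, hx1, hx2⟩ := hpair S hS S₁ hS₁
      exact hauth ⟨x, ⟨S, S9nonew (hws S hS) (Or.inr hvS), huS, hx1, hvS⟩,
        ⟨S₁, S9nonew (hws S₁ hS₁) (Or.inl huS₁), hvS₁, hx2, huS₁⟩⟩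
    refine S9main (fun a b => A b a) (fun a b => S9rtg_rev (hstrong b a)) (S9helly_rev hH)
      v u (Ne.symm huv) (S9auth_rev hauth) 𝒮 hne ?_ hpair hNou
    intro S hS
    exact S9walkset_congr (fun a b => by tauto) (S9walkset_rev (hws S hS))
end

section
/- Let R = (V, A) be a digraph and let (u,v) be an authorized arc of R (u ≠ v). Then (v,u) is an authorized arc of R, and moreover (v,u) remains an authorized arc of the digraph R′ = (V, A ∪ {(u,v)}) obtained by adding the arc (u,v) to R. -/
/-! Common definitions: temporal (di)graphs, journeys, footprints,
closed walks, the walk-Helly property, tree representations, etc. -/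

variable {V : Type*}

/-- if `(u, v)` is an authorized arc of `A`, then so is `(v, u)`, and
`(v, u)` remains authorized after adding the arc `(u, v)` to `A`. -/
theorem stmt10 {V : Type*} [Fintype V] (A : V → V → Prop)
    (u v : V) (huv : u ≠ v) (hauth : IsAuthorized A u v) :
    IsAuthorized A v u ∧
      IsAuthorized (fun a b => A a b ∨ (a = u ∧ b = v)) v u := by
  constructor
  · rintro ⟨x, h1, h2⟩
    exact hauth ⟨x, h2, h1⟩
  · rintro ⟨x, ⟨S, ⟨k, w, ⟨hk, hcl, harc⟩, rfl⟩, hvS, hxS, huS⟩,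
      ⟨S', ⟨k', w', ⟨hk', hcl', harc'⟩, rfl⟩, huS', hxS', hvS'⟩⟩
    apply hauth
    refine ⟨x, ⟨walkSet k' w', ⟨k', w', ⟨hk', hcl', ?_⟩, rfl⟩, huS', hxS', hvS'⟩,
      ⟨walkSet k w, ⟨k, w, ⟨hk, hcl, ?_⟩, rfl⟩, hvS, hxS, huS⟩⟩
    · intro i hi
      rcases harc' i hi with h | ⟨h1, h2⟩
      · exact h
      · exfalso; apply hvS'
        rcases Nat.lt_or_ge (i + 1) k' with h' | h'
        · exact ⟨i + 1, h', h2⟩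
        · have hik : i + 1 = k' := le_antisymm hi h'
          exact ⟨0, hk', by rw [← hcl', ← hik]; exact h2⟩
    · intro i hi
      rcases harc i hi with h | ⟨h1, h2⟩
      · exact h
      · exact absurd ⟨i, hi, h1⟩ huS
end

section
/- Let R = (V, A) be a strongly connected digraph on n vertices that is walk-Helly, and suppose that the forced edges of R do not form a spanning tree of V (i.e., it is not the case that there are exactly n − 1 forced edges forming a tree on V). Then there exist distinct vertices u, v such that (u,v) ∉ A and (u,v) is an authorized arc of R. -/
/-! Common definitions: temporal (di)graphs, journeys, footprints,
closed walks, the walk-Helly property, tree representations, etc. -/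

variable {V : Type*}

section Stmt11Aux

variable {V : Type*}

lemma closedWalk_mod {A : V → V → Prop} {k : ℕ} {w : ℕ → V}
    (h : IsClosedWalk A k w) (i : ℕ) : A (w (i % k)) (w ((i + 1) % k)) := by
  obtain ⟨hk, hcl, harc⟩ := h
  have hik : i % k < k := Nat.mod_lt _ hk
  have hmod : (i + 1) % k = (i % k + 1) % k := by
    conv_lhs => rw [Nat.add_mod]
    conv_rhs => rw [Nat.add_mod, Nat.mod_mod_of_dvd _ dvd_rfl]
  by_cases h1 : i % k + 1 < k
  · rw [hmod, Nat.mod_eq_of_lt h1]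
    exact harc _ hik
  · have h2 : i % k + 1 = k := by omega
    have h3 : (i + 1) % k = 0 := by rw [hmod, h2, Nat.mod_self]
    have h4 := harc _ hik
    rw [h2, hcl] at h4
    rw [h3]
    exact h4

lemma rotate_walk {A : V → V → Prop} {k : ℕ} {w : ℕ → V}
    (h : IsClosedWalk A k w) {i0 : ℕ} (hi0 : i0 < k) :
    ∃ w' : ℕ → V, IsClosedWalk A k w' ∧ w' 0 = w i0 ∧ walkSet k w' = walkSet k w := by
  have hk := h.1
  refine ⟨fun j => w ((j + i0) % k), ⟨hk, ?_, ?_⟩, ?_, ?_⟩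
  · show w ((k + i0) % k) = w ((0 + i0) % k)
    congr 1
    rw [Nat.add_mod_left, Nat.zero_add]
  · intro i _
    show A (w ((i + i0) % k)) (w ((i + 1 + i0) % k))
    rw [show i + 1 + i0 = i + i0 + 1 from by omega]
    exact closedWalk_mod h (i + i0)
  · show w ((0 + i0) % k) = w i0
    rw [Nat.zero_add, Nat.mod_eq_of_lt hi0]
  · ext x
    simp only [walkSet, Set.mem_setOf_eq]
    constructor
    · rintro ⟨j, hj, rfl⟩
      exact ⟨(j + i0) % k, Nat.mod_lt _ hk, rfl⟩
    · rintro ⟨i, hi, rfl⟩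
      refine ⟨(i + (k - i0)) % k, Nat.mod_lt _ hk, ?_⟩
      show w (((i + (k - i0)) % k + i0) % k) = w i
      congr 1
      rw [Nat.mod_add_mod, show i + (k - i0) + i0 = i + k from by omega,
        Nat.add_mod_right, Nat.mod_eq_of_lt hi]

lemma union_walkSet {A : V → V → Prop} {S S' : Set V} (hS : IsWalkSet A S)
    (hS' : IsWalkSet A S') {a : V} (ha : a ∈ S) (ha' : a ∈ S') :
    IsWalkSet A (S ∪ S') := by
  obtain ⟨k, w, hw, rfl⟩ := hS
  obtain ⟨k', w2, hw2, rfl⟩ := hS'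
  obtain ⟨i0, hi0, hw0⟩ := ha
  obtain ⟨j0, hj0, hw20⟩ := ha'
  obtain ⟨v, hv, hv0, hvset⟩ := rotate_walk hw hi0
  obtain ⟨v', hv', hv'0, hv'set⟩ := rotate_walk hw2 hj0
  have hk := hv.1; have hk' := hv'.1
  rw [← hvset, ← hv'set]
  refine ⟨k + k', fun j => if j < k then v j else v' (j - k), ⟨by omega, ?_, ?_⟩, ?_⟩
  · have h1 : ¬ (k + k' < k) := by omega
    have h0 : (0:ℕ) < k := hk
    simp only [if_neg h1, if_pos h0]
    rw [show k + k' - k = k' from by omega, hv'.2.1, hv'0, hw20, ← hw0, ← hv0]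
  · intro i hi
    by_cases h1 : i + 1 < k
    · have h0 : i < k := by omega
      simp only [if_pos h0, if_pos h1]
      exact hv.2.2 i (by omega)
    · by_cases h2 : i < k
      · have h3 : i + 1 = k := by omega
        simp only [if_pos h2, if_neg h1]
        have harc := hv.2.2 i h2
        rw [h3, hv.2.1, hv0, hw0] at harc
        rw [show i + 1 - k = 0 from by omega, hv'0, hw20]
        exact harc
      · simp only [if_neg h2, if_neg h1]
        rw [show i + 1 - k = (i - k) + 1 from by omega]
        exact hv'.2.2 (i - k) (by omega)
  · ext x
    simp only [walkSet, Set.mem_setOf_eq, Set.mem_union]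
    constructor
    · rintro (⟨i, hi, rfl⟩ | ⟨i, hi, rfl⟩)
      · exact ⟨i, by omega, by simp [hi]⟩
      · exact ⟨k + i, by omega, by
          rw [if_neg (show ¬ (k + i < k) from by omega), show k + i - k = i from by omega]⟩
    · rintro ⟨j, hj, rfl⟩
      by_cases h2 : j < k
      · exact Or.inl ⟨j, h2, by simp [h2]⟩
      · exact Or.inr ⟨j - k, by omega, by simp [h2]⟩

lemma pair_walkSet {A : V → V → Prop} {u v : V} (h1 : A u v) (h2 : A v u) :
    IsWalkSet A {u, v} := by
  refine ⟨2, fun i => if i = 1 then v else u, ⟨by omega, by norm_num, ?_⟩, ?_⟩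
  · intro i hi
    interval_cases i <;> simp [h1, h2]
  · ext x
    simp only [walkSet, Set.mem_setOf_eq, Set.mem_insert_iff, Set.mem_singleton_iff]
    constructor
    · rintro (rfl | rfl)
      · exact ⟨0, by omega, by simp⟩
      · exact ⟨1, by omega, by simp⟩
    · rintro ⟨i, hi, rfl⟩
      interval_cases i <;> simp

lemma support_walkSet {A : V → V → Prop} {a b : V} (p : (forcedGraph A).Walk a b)
    (hp : ¬ p.Nil) : IsWalkSet A {x | x ∈ p.support} := by
  induction p with
  | nil => simp at hp
  | @cons a c b h q ih =>
    cases q with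
    | nil =>
      have heq : {x | x ∈ (SimpleGraph.Walk.cons h SimpleGraph.Walk.nil).support}
          = ({a, c} : Set V) := by
        ext x; simp
      rw [heq]
      exact pair_walkSet h.2.1 h.2.2
    | @cons _ d _ h' q' =>
      have hq : ¬ (SimpleGraph.Walk.cons h' q').Nil := by simp
      have hmem : c ∈ (SimpleGraph.Walk.cons h' q').support := by simp
      have heq : {x | x ∈ (SimpleGraph.Walk.cons h (SimpleGraph.Walk.cons h' q')).support}
          = ({a, c} : Set V) ∪ {x | x ∈ (SimpleGraph.Walk.cons h' q').support} := by
        ext x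
        simp only [SimpleGraph.Walk.support_cons, List.mem_cons, Set.mem_union,
          Set.mem_insert_iff, Set.mem_singleton_iff, Set.mem_setOf_eq]
        tauto
      rw [heq]
      exact union_walkSet (pair_walkSet h.2.1 h.2.2) (ih hq) (by simp) hmem

lemma forced_acyclic {A : V → V → Prop} (hH : WalkHelly A) :
    (forcedGraph A).IsAcyclic := by
  intro v c hc
  have h3 := hc.three_le_length
  have hcnil : ¬ c.Nil := by
    rw [SimpleGraph.Walk.nil_iff_length_eq]; omega
  obtain ⟨u₁, h, q, rfl⟩ := SimpleGraph.Walk.not_nil_iff.mp hcnil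
  have hvu : v ≠ u₁ := h.ne
  have hqrnil : ¬ q.reverse.Nil := by
    rw [SimpleGraph.Walk.nil_iff_length_eq, SimpleGraph.Walk.length_reverse]
    simp only [SimpleGraph.Walk.length_cons] at h3
    omega
  obtain ⟨z, h', r, hqr⟩ := SimpleGraph.Walk.not_nil_iff.mp hqrnil
  have hrnil : ¬ r.Nil := by
    rw [SimpleGraph.Walk.nil_iff_length_eq]
    have : q.reverse.length = r.length + 1 := by rw [hqr]; simp
    rw [SimpleGraph.Walk.length_reverse] at this
    simp only [SimpleGraph.Walk.length_cons] at h3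
    omega
  have hnd : q.support.Nodup := by
    have := hc.support_nodup
    simpa using this
  have hsupp : q.support.reverse = v :: r.support := by
    rw [← SimpleGraph.Walk.support_reverse, hqr, SimpleGraph.Walk.support_cons]
  have hndr : (v :: r.support).Nodup := by
    rw [← hsupp]; exact List.nodup_reverse.mpr hnd
  have hvr : v ∉ r.support := (List.nodup_cons.mp hndr).1
  have hrnd : r.support.Nodup := (List.nodup_cons.mp hndr).2
  have hY := support_walkSet r hrnil
  have hX : IsWalkSet A {v, u₁} := pair_walkSet h.2.1 h.2.2
  have hZ : IsWalkSet A {v, z} := pair_walkSet h'.2.1 h'.2.2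
  have hu₁Y : u₁ ∈ r.support := r.end_mem_support
  have hzY : z ∈ r.support := r.start_mem_support
  obtain ⟨y, hy⟩ := hH {{v, u₁}, {v, z}, {x | x ∈ r.support}}
    ⟨{v, u₁}, by simp⟩
    (by
      intro S hS
      simp only [Set.mem_insert_iff, Set.mem_singleton_iff] at hS
      rcases hS with rfl | rfl | rfl
      · exact hX
      · exact hZ
      · exact hY)
    (by
      intro S hS S' hS'
      simp only [Set.mem_insert_iff, Set.mem_singleton_iff] at hS hS'
      rcases hS with rfl | rfl | rfl <;> rcases hS' with rfl | rfl | rfl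
      · exact ⟨v, by simp⟩
      · exact ⟨v, by simp⟩
      · exact ⟨u₁, by simp [hu₁Y]⟩
      · exact ⟨v, by simp⟩
      · exact ⟨v, by simp⟩
      · exact ⟨z, by simp [hzY]⟩
      · exact ⟨u₁, by simp [hu₁Y]⟩
      · exact ⟨z, by simp [hzY]⟩
      · exact ⟨z, by simp [hzY]⟩)
  have hy1 : y ∈ ({v, u₁} : Set V) := hy _ (by simp)
  have hy2 : y ∈ ({v, z} : Set V) := hy _ (by simp)
  have hy3 : y ∈ r.support := hy {x | x ∈ r.support} (by simp)
  have hyv : y ≠ v := fun e => hvr (e ▸ hy3)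
  have hy1' : y = u₁ := by rcases hy1 with rfl | rfl; exact absurd rfl hyv; rfl
  have hy2' : y = z := by rcases hy2 with rfl | rfl; exact absurd rfl hyv; rfl
  -- so z = u₁, but r is a nonnil walk from z to u₁ with nodup support
  have hzu : z = u₁ := hy2'.symm.trans hy1'
  obtain ⟨d, h'', r', hrr⟩ := SimpleGraph.Walk.not_nil_iff.mp hrnil
  have : u₁ ∈ r'.support := r'.end_mem_support
  rw [hrr, SimpleGraph.Walk.support_cons] at hrnd
  exact (List.nodup_cons.mp hrnd).1 (hzu ▸ this)

/-- Intersection of all walk sets containing `u` and `v`. -/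
def Bset (A : V → V → Prop) (u v : V) : Set V :=
  {x | ∀ S : Set V, IsWalkSet A S → u ∈ S → v ∈ S → x ∈ S}

lemma auth_connect {A : V → V → Prop} [Fintype V] (hH : WalkHelly A) :
    ∀ (n : ℕ) (u v : V), u ≠ v → (Bset A u v).ncard ≤ n →
      Relation.ReflTransGen (fun a b => a ≠ b ∧ IsAuthorized A a b) u v := by
  intro n
  induction n with
  | zero =>
    intro u v _ hcard
    exfalso
    have hu : u ∈ Bset A u v := fun S _ hu _ => hu
    have := (Set.ncard_pos (Set.toFinite _)).mpr ⟨u, hu⟩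
    omega
  | succ n ih =>
    intro u v hne hcard
    by_cases hauth : IsAuthorized A u v
    · exact Relation.ReflTransGen.single ⟨hne, hauth⟩
    · obtain ⟨x, ⟨S1, hS1, hu1, hx1, hv1⟩, ⟨S2, hS2, hv2, hx2, hu2⟩⟩ := not_not.mp hauth
      obtain ⟨y, hy⟩ := hH (insert S1 (insert S2 {S | IsWalkSet A S ∧ u ∈ S ∧ v ∈ S}))
        ⟨S1, by simp⟩
        (by
          intro S hS
          simp only [Set.mem_insert_iff, Set.mem_setOf_eq] at hS
          rcases hS with rfl | rfl | ⟨h, _, _⟩ <;> assumption)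
        (by
          intro S hS S' hS'
          simp only [Set.mem_insert_iff, Set.mem_setOf_eq] at hS hS'
          rcases hS with rfl | rfl | ⟨_, hSu, hSv⟩ <;>
            rcases hS' with rfl | rfl | ⟨_, hS'u, hS'v⟩
          · exact ⟨x, hx1, hx1⟩
          · exact ⟨x, hx1, hx2⟩
          · exact ⟨u, hu1, hS'u⟩
          · exact ⟨x, hx2, hx1⟩
          · exact ⟨x, hx2, hx2⟩
          · exact ⟨v, hv2, hS'v⟩
          · exact ⟨u, hSu, hu1⟩
          · exact ⟨v, hSv, hv2⟩
          · exact ⟨u, hSu, hS'u⟩)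
      have hyS1 : y ∈ S1 := hy S1 (by simp)
      have hyS2 : y ∈ S2 := hy S2 (by simp)
      have hyB : y ∈ Bset A u v := fun S hS hu hv =>
        hy S (Set.mem_insert_iff.mpr (Or.inr (Set.mem_insert_iff.mpr
          (Or.inr ⟨hS, hu, hv⟩))))
      have hyu : y ≠ u := fun e => hu2 (e ▸ hyS2)
      have hyv : y ≠ v := fun e => hv1 (e ▸ hyS1)
      have hvB : v ∈ Bset A u v := fun S _ _ hv => hv
      have huB : u ∈ Bset A u v := fun S _ hu _ => hu
      have hsub1 : Bset A u y ⊆ Bset A u v :=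
        fun z hz S hS hu hv => hz S hS hu (hyB S hS hu hv)
      have hnv : v ∉ Bset A u y := fun hv => hv1 (hv S1 hS1 hu1 hyS1)
      have hlt1 : (Bset A u y).ncard < (Bset A u v).ncard :=
        Set.ncard_lt_ncard ((Set.ssubset_iff_of_subset hsub1).mpr ⟨v, hvB, hnv⟩)
          (Set.toFinite _)
      have hsub2 : Bset A y v ⊆ Bset A u v :=
        fun z hz S hS hu hv => hz S hS (hyB S hS hu hv) hv
      have hnu : u ∉ Bset A y v := fun hu => hu2 (hu S2 hS2 hyS2 hv2)
      have hlt2 : (Bset A y v).ncard < (Bset A u v).ncard :=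
        Set.ncard_lt_ncard ((Set.ssubset_iff_of_subset hsub2).mpr ⟨u, huB, hnu⟩)
          (Set.toFinite _)
      exact (ih u y hyu.symm (by omega)).trans (ih y v hyv (by omega))

end Stmt11Aux

/-- if a strongly connected walk-Helly digraph's forced edges do not form
a spanning tree, then there is an authorized arc `(u, v)` that is not an arc of `A`. -/
theorem stmt11 {V : Type*} [Fintype V] [Nonempty V] (A : V → V → Prop)
    (hstrong : ∀ u v : V, Relation.ReflTransGen A u v)
    (hH : WalkHelly A)
    (htree : ¬ (forcedGraph A).IsTree) :
    ∃ u v : V, u ≠ v ∧ ¬ A u v ∧ IsAuthorized A u v := by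
  by_contra hgoal
  push_neg at hgoal
  have hsymm : ∀ u v : V, IsAuthorized A u v → IsAuthorized A v u := by
    intro u v h hc
    obtain ⟨x, h1, h2⟩ := hc
    exact h ⟨x, h2, h1⟩
  have hforce : ∀ u v : V, u ≠ v → IsAuthorized A u v → (forcedGraph A).Adj u v := by
    intro u v hne hauth
    refine ⟨hne, ?_, ?_⟩
    · by_contra hA; exact hgoal u v hne hA hauth
    · by_contra hA; exact hgoal v u hne.symm hA (hsymm u v hauth)
  have hconn : (forcedGraph A).Connected := by
    rw [SimpleGraph.connected_iff]
    refine ⟨fun u v => ?_, ‹Nonempty V›⟩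
    by_cases he : u = v
    · subst he; exact SimpleGraph.Reachable.refl u
    · rw [SimpleGraph.reachable_iff_reflTransGen]
      exact Relation.ReflTransGen.mono (fun a b (hab : a ≠ b ∧ IsAuthorized A a b) => hforce a b hab.1 hab.2) _ _
        (auth_connect hH (Bset A u v).ncard u v he le_rfl)
  exact htree ⟨hconn, forced_acyclic hH⟩
end

section
/- For every integer n ≥ 4 there exists a simple temporal graph 𝒢 = (V, ℰ) on n vertices with exactly 2n − 4 temporal edges that is temporally connected, i.e., for every ordered pair of distinct vertices u, v there is a journey from u to v in 𝒢. -/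
/-! Common definitions: temporal (di)graphs, journeys, footprints,
closed walks, the walk-Helly property, tree representations, etc. -/

variable {V : Type*}

lemma journey_one {V : Type*} {E : Set (Sym2 V × ℕ)} {u v : V} {t : ℕ}
    (h : (s(u,v),t) ∈ E) : Journey E u v := by
  refine ⟨1, fun j => if j = 0 then u else v, fun _ => t, le_refl 1, rfl, rfl, ?_, by omega⟩
  intro i hi
  interval_cases i
  simpa using h

lemma journey_two {V : Type*} {E : Set (Sym2 V × ℕ)} {u m v : V} {t1 t2 : ℕ}
    (h1 : (s(u,m),t1) ∈ E) (h2 : (s(m,v),t2) ∈ E) (ht : t1 < t2) : Journey E u v := by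
  refine ⟨2, fun j => if j = 0 then u else if j = 1 then m else v,
    fun j => if j = 0 then t1 else t2, by omega, rfl, rfl, ?_, ?_⟩
  · intro i hi
    interval_cases i
    · simpa using h1
    · simpa using h2
  · intro i hi
    have : i = 0 := by omega
    subst this
    simp [ht]

/-- for every `n ≥ 4` there is a simple temporal graph on `n` vertices
with exactly `2n - 4` temporal edges that is temporally connected. -/
theorem stmt16 (n : ℕ) (hn : 4 ≤ n) :
    ∃ E : Finset (Sym2 (Fin n) × ℕ),
      ValidTemporal E ∧
      (∀ e₁ ∈ E, ∀ e₂ ∈ E, (e₁ : Sym2 (Fin n) × ℕ).1 = e₂.1 → e₁ = e₂) ∧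
      E.card = 2 * n - 4 ∧
      ∀ u v : Fin n, u ≠ v → Journey (↑E : Set (Sym2 (Fin n) × ℕ)) u v := by
  have h0 : 0 < n := by omega
  set a : Fin n := ⟨0, by omega⟩ with ha
  set b : Fin n := ⟨1, by omega⟩ with hb
  have hab : a ≠ b := by simp [ha, hb, Fin.ext_iff]
  set S : Finset (Fin n) := Finset.univ.filter (fun i => 2 ≤ i.val) with hS
  have hmemS : ∀ i : Fin n, i ∈ S ↔ 2 ≤ i.val := by
    intro i; simp [hS]
  have hna : ∀ i : Fin n, 2 ≤ i.val → a ≠ i := by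
    intro i hi h; rw [Fin.ext_iff] at h; simp [ha] at h; omega
  have hnb : ∀ i : Fin n, 2 ≤ i.val → b ≠ i := by
    intro i hi h; rw [Fin.ext_iff] at h; simp [hb] at h; omega
  set E : Finset (Sym2 (Fin n) × ℕ) :=
    S.image (fun i => (s(a, i), i.val - 1)) ∪ S.image (fun i => (s(b, i), n - i.val)) with hE
  have hmem1 : ∀ i : Fin n, 2 ≤ i.val → (s(a, i), i.val - 1) ∈ E := by
    intro i hi
    exact Finset.mem_union_left _ (Finset.mem_image.mpr ⟨i, (hmemS i).mpr hi, rfl⟩)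
  have hmem2 : ∀ i : Fin n, 2 ≤ i.val → (s(b, i), n - i.val) ∈ E := by
    intro i hi
    exact Finset.mem_union_right _ (Finset.mem_image.mpr ⟨i, (hmemS i).mpr hi, rfl⟩)
  have hshape : ∀ e ∈ E, (∃ i : Fin n, 2 ≤ i.val ∧ e = (s(a, i), i.val - 1)) ∨
      (∃ i : Fin n, 2 ≤ i.val ∧ e = (s(b, i), n - i.val)) := by
    intro e he
    rcases Finset.mem_union.mp he with h | h <;> rcases Finset.mem_image.mp h with ⟨i, hi, rfl⟩
    · exact Or.inl ⟨i, (hmemS i).mp hi, rfl⟩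
    · exact Or.inr ⟨i, (hmemS i).mp hi, rfl⟩
  refine ⟨E, ?_, ?_, ?_, ?_⟩
  · -- ValidTemporal
    intro e he
    rcases hshape e he with ⟨i, hi, rfl⟩ | ⟨i, hi, rfl⟩
    · exact ⟨by simpa using (hna i hi), by simp; omega⟩
    · exact ⟨by simpa using (hnb i hi), by simp; omega⟩
  · -- simple
    intro e₁ he₁ e₂ he₂ heq
    rcases hshape e₁ he₁ with ⟨i, hi, rfl⟩ | ⟨i, hi, rfl⟩ <;>
      rcases hshape e₂ he₂ with ⟨j, hj, rfl⟩ | ⟨j, hj, rfl⟩ <;>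
        simp only [Prod.mk.injEq] at heq ⊢ <;> rw [Sym2.eq_iff] at heq
    · rcases heq with ⟨-, rfl⟩ | ⟨h1, h2⟩
      · exact ⟨rfl, rfl⟩
      · exact absurd h1 (hna j hj)
    · rcases heq with ⟨h1, -⟩ | ⟨h1, h2⟩
      · exact (hab h1).elim
      · exact (hna j hj h1).elim
    · rcases heq with ⟨h1, -⟩ | ⟨h1, h2⟩
      · exact (hab h1.symm).elim
      · exact (hnb j hj h1).elim
    · rcases heq with ⟨-, rfl⟩ | ⟨h1, h2⟩
      · exact ⟨rfl, rfl⟩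
      · exact absurd h1 (hnb j hj)
  · -- cardinality
    have hScard : S.card = n - 2 := by
      have : S = Finset.univ \ {a, b} := by
        ext i
        simp only [hmemS, Finset.mem_sdiff, Finset.mem_univ, true_and, Finset.mem_insert,
          Finset.mem_singleton, not_or]
        constructor
        · intro hi
          exact ⟨fun h => (hna i hi) h.symm, fun h => (hnb i hi) h.symm⟩
        · rintro ⟨h1, h2⟩
          rw [Fin.ext_iff] at h1 h2
          simp [ha, hb] at h1 h2
          omega
      rw [this, Finset.card_sdiff_of_subset (by simp)]
      simp [Finset.card_pair hab]
    have hinj1 : Set.InjOn (fun i : Fin n => (s(a, i), i.val - 1)) S := by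
      intro i hi j hj h
      simp only [Prod.mk.injEq, Sym2.eq_iff] at h
      rcases h.1 with ⟨-, h⟩ | ⟨h, -⟩
      · exact h
      · exact absurd h (hna j ((hmemS j).mp hj))
    have hinj2 : Set.InjOn (fun i : Fin n => (s(b, i), n - i.val)) S := by
      intro i hi j hj h
      simp only [Prod.mk.injEq, Sym2.eq_iff] at h
      rcases h.1 with ⟨-, h⟩ | ⟨h, -⟩
      · exact h
      · exact absurd h (hnb j ((hmemS j).mp hj))
    have hdisj : Disjoint (S.image (fun i => (s(a, i), i.val - 1)))
        (S.image (fun i => (s(b, i), n - i.val))) := by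
      rw [Finset.disjoint_left]
      rintro e h1 h2
      rcases Finset.mem_image.mp h1 with ⟨i, hi, rfl⟩
      rcases Finset.mem_image.mp h2 with ⟨j, hj, h⟩
      simp only [Prod.mk.injEq, Sym2.eq_iff] at h
      rcases h.1 with ⟨h, -⟩ | ⟨h, -⟩
      · exact hab h.symm
      · exact hnb i ((hmemS i).mp hi) h
    rw [hE, Finset.card_union_of_disjoint hdisj, Finset.card_image_of_injOn hinj1,
      Finset.card_image_of_injOn hinj2, hScard]
    omega
  · -- temporal connectivity
    intro u v huv
    set c : Fin n := ⟨2, by omega⟩ with hc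
    set d : Fin n := ⟨n - 1, by omega⟩ with hd
    have hcval : (2 : ℕ) ≤ c.val := by simp [hc]
    have hdval : (2 : ℕ) ≤ d.val := by simp [hd]; omega
    have mem1 : ∀ i : Fin n, 2 ≤ i.val → (s(a, i), i.val - 1) ∈ (↑E : Set (Sym2 (Fin n) × ℕ)) :=
      fun i hi => Finset.mem_coe.mpr (hmem1 i hi)
    have mem2 : ∀ i : Fin n, 2 ≤ i.val → (s(b, i), n - i.val) ∈ (↑E : Set (Sym2 (Fin n) × ℕ)) :=
      fun i hi => Finset.mem_coe.mpr (hmem2 i hi)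
    have mem1' : ∀ i : Fin n, 2 ≤ i.val → (s(i, a), i.val - 1) ∈ (↑E : Set (Sym2 (Fin n) × ℕ)) :=
      fun i hi => by rw [Sym2.eq_swap]; exact mem1 i hi
    have mem2' : ∀ i : Fin n, 2 ≤ i.val → (s(i, b), n - i.val) ∈ (↑E : Set (Sym2 (Fin n) × ℕ)) :=
      fun i hi => by rw [Sym2.eq_swap]; exact mem2 i hi
    have hucase : u.val = 0 ∨ u.val = 1 ∨ 2 ≤ u.val := by omega
    have hvcase : v.val = 0 ∨ v.val = 1 ∨ 2 ≤ v.val := by omega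
    have hua : u.val = 0 → u = a := fun h => Fin.ext (by simp [ha, h])
    have hub : u.val = 1 → u = b := fun h => Fin.ext (by simp [hb, h])
    have hva : v.val = 0 → v = a := fun h => Fin.ext (by simp [ha, h])
    have hvb : v.val = 1 → v = b := fun h => Fin.ext (by simp [hb, h])
    rcases hucase with hu | hu | hu <;> rcases hvcase with hv | hv | hv
    · exact absurd (Fin.ext (hu.trans hv.symm) : u = v) huv
    · -- a → b via c
      rw [hua hu, hvb hv]
      refine journey_two (mem1 c hcval) (mem2' c hcval) ?_
      simp [hc]; omega
    · -- a → v direct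
      rw [hua hu]
      exact journey_one (mem1 v hv)
    · -- b → a via d
      rw [hub hu, hva hv]
      refine journey_two (mem2 d hdval) (mem1' d hdval) ?_
      simp [hd]; omega
    · exact absurd (Fin.ext (hu.trans hv.symm) : u = v) huv
    · -- b → v direct
      rw [hub hu]
      exact journey_one (mem2 v hv)
    · -- u → a direct
      rw [hva hv]
      exact journey_one (mem1' u hu)
    · -- u → b direct
      rw [hvb hv]
      exact journey_one (mem2' u hu)
    · -- both ≥ 2
      have : u.val < v.val ∨ v.val < u.val := by
        rcases lt_or_gt_of_ne (fun h => huv (Fin.ext h)) with h | h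
        exacts [Or.inl h, Or.inr h]
      rcases this with h | h
      · refine journey_two (mem1' u hu) (mem1 v hv) (by omega)
      · refine journey_two (mem2' u hu) (mem2 v hv) (by omega)
end
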